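/- arXiv:2502.04084 — 6 statements merged into one kernel-verified Lean document; each statement's English description precedes it below -/
import Mathlib

section
/- For every a = (a₁,a₂) ∈ ℚ² with a ∉ ℤ² and every τ in the upper half-plane ℍ: (i) g₍₋ₐ₎(τ) = −gₐ(τ); and (ii) for every b = (b₁,b₂) ∈ ℤ², g₍ₐ₊ᵦ₎(τ) = (−1)^{b₁b₂+b₁+b₂} · e^{−πi(b₁a₂−b₂a₁)} · gₐ(τ). -/
noncomputable section

open Complex Filter Matrix

namespace SiegelPaper

/-- The second Bernoulli polynomial (complex variable). -/
def B2 (x : ℂ) : ℂ := x ^ 2 - x + 1 / 6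

/-- The second Bernoulli polynomial (real variable). -/
def B2R (x : ℝ) : ℝ := x ^ 2 - x + 1 / 6

/-- The Siegel function `g_a(τ)` attached to `a = (a₁, a₂) ∈ ℚ²`, defined (for `τ` in the
upper half-plane) by the convergent product
`g_a(τ) = −e^{πi a₂(a₁−1)} · e^{πiτ B₂(a₁)} · (1 − q_z) · ∏_{m≥1} (1 − qᵐ q_z)(1 − qᵐ q_z⁻¹)`
where `q = e^{2πiτ}` and `q_z = e^{2πi(a₁ τ + a₂)}`. -/
def siegel (a : ℚ × ℚ) (τ : ℂ) : ℂ :=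
  -Complex.exp (Real.pi * I * (a.2 : ℂ) * ((a.1 : ℂ) - 1)) *
    Complex.exp (Real.pi * I * τ * B2 (a.1 : ℂ)) *
    (1 - Complex.exp (2 * Real.pi * I * ((a.1 : ℂ) * τ + (a.2 : ℂ)))) *
    ∏' m : ℕ,
      ((1 - Complex.exp (2 * Real.pi * I * τ) ^ (m + 1) *
            Complex.exp (2 * Real.pi * I * ((a.1 : ℂ) * τ + (a.2 : ℂ)))) *
        (1 - Complex.exp (2 * Real.pi * I * τ) ^ (m + 1) /
            Complex.exp (2 * Real.pi * I * ((a.1 : ℂ) * τ + (a.2 : ℂ)))))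

/-- `a ∈ ℚ²` lies in `ℤ²`. -/
def isIntegral (a : ℚ × ℚ) : Prop := (∃ m : ℤ, a.1 = m) ∧ (∃ m : ℤ, a.2 = m)

/-- The filter `Im τ → ∞` on `ℂ`. -/
def atImInfty : Filter ℂ := Filter.comap Complex.im Filter.atTop

/-- `E_i(τ) = g_{(αⁱ/p, 0)}(τ) · ∏_{j=0}^{p−2} g_{(αⁱ/p, αʲ/p)}(τ)`. -/
def E (p : ℕ) (α : ℤ) (i : ℕ) (τ : ℂ) : ℂ :=
  siegel ((α : ℚ) ^ i / (p : ℚ), 0) τ *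
    ∏ j ∈ Finset.range (p - 1), siegel ((α : ℚ) ^ i / (p : ℚ), (α : ℚ) ^ j / (p : ℚ)) τ

/-- `F_i(τ) = g_{(0, αⁱ/p)}(τ)`. -/
def F (p : ℕ) (α : ℤ) (i : ℕ) (τ : ℂ) : ℂ :=
  siegel (0, (α : ℚ) ^ i / (p : ℚ)) τ

/-- The Möbius action of a matrix in `SL₂(ℤ)` on (the upper half-plane inside) `ℂ`. -/
def moebius (γ : Matrix.SpecialLinearGroup (Fin 2) ℤ) (τ : ℂ) : ℂ :=
  ((γ.1 0 0 : ℂ) * τ + (γ.1 0 1 : ℂ)) / ((γ.1 1 0 : ℂ) * τ + (γ.1 1 1 : ℂ))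

/-- A modular unit on `X₁(p)`: a function `f : ℍ → ℂ` which is holomorphic and nowhere
vanishing on the upper half-plane, invariant under `Γ₁(p)`, and meromorphic at the cusps. -/
structure IsModularUnit (p : ℕ) (f : ℂ → ℂ) : Prop where
  holo : ∀ τ : ℂ, 0 < τ.im → DifferentiableAt ℂ f τ
  ne_zero : ∀ τ : ℂ, 0 < τ.im → f τ ≠ 0
  invariant : ∀ γ ∈ CongruenceSubgroup.Gamma1 p, ∀ τ : ℂ, 0 < τ.im → f (moebius γ τ) = f τ
  merom_at_cusps : ∀ γ : Matrix.SpecialLinearGroup (Fin 2) ℤ, ∃ m : ℤ, ∃ L : ℂ, L ≠ 0 ∧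
    Filter.Tendsto (fun τ : ℂ => f (moebius γ τ) *
        Complex.exp (-(2 * Real.pi * I * (m : ℂ) * τ) / (p : ℂ)))
      atImInfty (nhds L)

/-- `f` has order `r` at the cusp `P_i` (represented by `αⁱ/p`, of width 1):
for any `γ ∈ SL₂(ℤ)` with first column `(αⁱ, p)ᵀ`, `f(γ·τ)·e^{−2πi r τ}` tends to a
nonzero limit as `Im τ → ∞`. -/
def HasOrderAtP (p : ℕ) (α : ℤ) (i : ℕ) (f : ℂ → ℂ) (r : ℝ) : Prop :=
  ∀ γ : Matrix.SpecialLinearGroup (Fin 2) ℤ, γ.1 0 0 = α ^ i → γ.1 1 0 = (p : ℤ) →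
    ∃ L : ℂ, L ≠ 0 ∧ Filter.Tendsto
      (fun τ : ℂ => f (moebius γ τ) * Complex.exp (-(2 * Real.pi * I * (r : ℂ) * τ)))
      atImInfty (nhds L)

/-- `f` has order `r` at the cusp `Q_i` (represented by `p/αⁱ`, of width `p`):
for any `γ ∈ SL₂(ℤ)` with first column `(p, αⁱ)ᵀ`, `f(γ·τ)·e^{−2πi r τ/p}` tends to a
nonzero limit as `Im τ → ∞`. -/
def HasOrderAtQ (p : ℕ) (α : ℤ) (i : ℕ) (f : ℂ → ℂ) (r : ℝ) : Prop :=
  ∀ γ : Matrix.SpecialLinearGroup (Fin 2) ℤ, γ.1 0 0 = (p : ℤ) → γ.1 1 0 = α ^ i →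
    ∃ L : ℂ, L ≠ 0 ∧ Filter.Tendsto
      (fun τ : ℂ => f (moebius γ τ) * Complex.exp (-(2 * Real.pi * I * (r : ℂ) * τ) / (p : ℂ)))
      atImInfty (nhds L)

/-- The matrix `γ_k = [[1, α^k],[0,1]] ∈ SL₂(ℤ)`. -/
def gammaMat (α : ℤ) (k : ℕ) : Matrix.SpecialLinearGroup (Fin 2) ℤ :=
  ⟨!![1, α ^ k; 0, 1], by simp [Matrix.det_fin_two_of]⟩

/-- `G_i = E_i · E_{n−1}^{−α^{2i+2}} · F_{n−1}^{p(α^{2i+2}−1)}` for `0 ≤ i ≤ n−2`, and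
`G_{n−1} = E_{n−1}^p · F_{n−1}^{−βp}`. -/
def G (p n : ℕ) (α β : ℤ) (i : ℕ) (τ : ℂ) : ℂ :=
  if i = n - 1 then E p α (n - 1) τ ^ (p : ℤ) * F p α (n - 1) τ ^ (-(β * (p : ℤ)))
  else
    E p α i τ * E p α (n - 1) τ ^ (-(α ^ (2 * i + 2))) *
      F p α (n - 1) τ ^ ((p : ℤ) * (α ^ (2 * i + 2) - 1))

/-- `H_i = F_i · F_{n−1}^{−α^{2i+2}+pβ(α^{2i+2}−1)}` for `0 ≤ i ≤ n−2`, and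
`H_{n−1} = F_{n−1}^{12p}`. -/
def H (p n : ℕ) (α β : ℤ) (i : ℕ) (τ : ℂ) : ℂ :=
  if i = n - 1 then F p α (n - 1) τ ^ (12 * (p : ℤ))
  else F p α i τ * F p α (n - 1) τ ^ (-(α ^ (2 * i + 2)) + (p : ℤ) * β * (α ^ (2 * i + 2) - 1))

/-- `I_i = E_{i−1} · E_i^{−γ²−1} · E_{i+1}^{γ²}` for `1 ≤ i ≤ n−2` (with `γ = α^{p−2}`), and
`I_{n−1} = (E_{n−2}·E_{n−1}⁻¹)^p`. -/
def Ifun (p n : ℕ) (α : ℤ) (i : ℕ) (τ : ℂ) : ℂ :=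
  if i = n - 1 then (E p α (n - 2) τ * (E p α (n - 1) τ)⁻¹) ^ (p : ℤ)
  else
    E p α (i - 1) τ * E p α i τ ^ (-((α ^ (p - 2)) ^ 2) - 1) *
      E p α (i + 1) τ ^ ((α ^ (p - 2)) ^ 2)

/-- `a_t = (p/2)·B₂({αᵗ/p})`, as a complex number. -/
def aC (p : ℕ) (α : ℤ) (t : ℕ) : ℂ :=
  ((p : ℂ) / 2) * B2 ((Int.fract ((α : ℝ) ^ t / (p : ℝ)) : ℝ) : ℂ)

/-- `y_s = ∑_{t<n} ω^{st}·a_t` (so `4·y_s = B_{2,χ_s}`). -/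
def yC (p n : ℕ) (α : ℤ) (ω : ℂ) (s : ℕ) : ℂ :=
  ∑ t ∈ Finset.range n, ω ^ (s * t) * aC p α t

/-- `b_j = (1/n)·∑_{s<n} ω^{−js}·y_s⁻¹`. -/
def bC (p n : ℕ) (α : ℤ) (ω : ℂ) (j : ℕ) : ℂ :=
  (1 / (n : ℂ)) * ∑ s ∈ Finset.range n, ω ^ (-(j * s : ℤ)) * (yC p n α ω s)⁻¹

/-- `c_0 = b_0 − b_1`, `c_1 = b_{n−1} − b_0`, `c_i = b_{n−i} − b_{n+1−i}` for `2 ≤ i ≤ n−1`. -/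
def cC (p n : ℕ) (α : ℤ) (ω : ℂ) (i : ℕ) : ℂ :=
  if i = 0 then bC p n α ω 0 - bC p n α ω 1
  else if i = 1 then bC p n α ω (n - 1) - bC p n α ω 0
  else bC p n α ω (n - i) - bC p n α ω (n + 1 - i)

/-- The generalized Bernoulli number `B_{2,χ} = p·∑_{a=1}^{p−1} χ(a)·B₂(a/p)`. -/
def B2chi (p : ℕ) (χ : DirichletCharacter ℂ p) : ℂ :=
  (p : ℂ) * ∑ a ∈ Finset.Icc 1 (p - 1), χ (a : ZMod p) * B2 ((a : ℂ) / (p : ℂ))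

set_option maxHeartbeats 1000000

set_option maxHeartbeats 1000000 in
private lemma mult_aux0 {q : ℂ} (hq : ‖q‖ < 1) (c : ℂ) :
    Multipliable (fun m : ℕ => 1 - q ^ (m + 1) * c) := by
  by_cases h : ∃ N : ℕ, 1 - q ^ (N + 1) * c = 0
  · obtain ⟨N, hN⟩ := h
    refine ⟨0, ?_⟩
    have hev : (fun S : Finset ℕ => ∏ i ∈ S, (1 - q ^ (i + 1) * c)) =ᶠ[atTop]
        (fun _ => (0 : ℂ)) := by
      filter_upwards [Filter.eventually_ge_atTop ({N} : Finset ℕ)] with S hS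
      exact Finset.prod_eq_zero (by simpa using hS) hN
    exact Tendsto.congr' hev.symm tendsto_const_nhds
  · push_neg at h
    refine Complex.multipliable_of_summable_log ?_
    have hgeo : Summable (fun n : ℕ => (3 / 2 : ℝ) * (‖q‖ ^ (n + 1) * ‖c‖)) := by
      apply Summable.mul_left
      apply Summable.mul_right
      exact ((summable_geometric_of_lt_one (norm_nonneg q) hq).comp_injective
        (add_left_injective 1))
    refine Summable.of_norm_bounded_eventually_nat hgeo ?_
    have h0 : Tendsto (fun n : ℕ => ‖q‖ ^ (n + 1) * ‖c‖) atTop (nhds (0 * ‖c‖)) :=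
      Tendsto.mul_const _ ((tendsto_pow_atTop_nhds_zero_of_lt_one (norm_nonneg q) hq).comp
        (tendsto_add_atTop_nat 1))
    rw [zero_mul] at h0
    replace h0 : Tendsto (fun n : ℕ => ‖q ^ (n + 1) * c‖) atTop (nhds 0) :=
      h0.congr (fun n => by rw [norm_mul, norm_pow])
    have h1 : ∀ᶠ n : ℕ in atTop, ‖q ^ (n + 1) * c‖ ≤ 1 / 2 :=
      h0.eventually (eventually_le_nhds (by norm_num))
    filter_upwards [h1] with n hn
    have : ‖Complex.log (1 + (-(q ^ (n + 1) * c)))‖ ≤ 3 / 2 * ‖-(q ^ (n + 1) * c)‖ :=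
      Complex.norm_log_one_add_half_le_self (by simpa using hn)
    simpa [sub_eq_add_neg, norm_mul, norm_pow, mul_assoc] using this

set_option maxHeartbeats 1000000 in
private lemma prodShift0 {q w : ℂ} (hq : ‖q‖ < 1) (hq0 : q ≠ 0) (hw : w ≠ 0) :
    (1 - q * w) * ∏' m : ℕ, ((1 - q ^ (m + 1) * (q * w)) * (1 - q ^ (m + 1) / (q * w))) =
      (1 - w⁻¹) * ∏' m : ℕ, ((1 - q ^ (m + 1) * w) * (1 - q ^ (m + 1) / w)) := by
  have A1 : Multipliable (fun m : ℕ => 1 - q ^ (m + 1) * w) := mult_aux0 hq w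
  have A2 : Multipliable (fun m : ℕ => 1 - q ^ (m + 1) * w⁻¹) := mult_aux0 hq w⁻¹
  have A1' : Multipliable (fun m : ℕ => 1 - q ^ (m + 2) * w) :=
    (mult_aux0 hq (q * w)).congr (fun m => by ring_nf)
  have A0 : Multipliable (fun m : ℕ => 1 - q ^ m * w⁻¹) := by
    refine ⟨(1 - q ^ 0 * w⁻¹) * ∏' m : ℕ, (1 - q ^ (m + 1) * w⁻¹), ?_⟩
    exact (HasProd.zero_mul A2.hasProd)
  have E1 : ∏' m : ℕ, ((1 - q ^ (m + 1) * (q * w)) * (1 - q ^ (m + 1) / (q * w))) =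
      ∏' m : ℕ, ((1 - q ^ (m + 2) * w) * (1 - q ^ m * w⁻¹)) := by
    refine tprod_congr fun m => ?_
    have e1 : q ^ (m + 1) * (q * w) = q ^ (m + 2) * w := by ring
    have e2 : q ^ (m + 1) / (q * w) = q ^ m * w⁻¹ := by
      field_simp
      ring
    rw [e1, e2]
  have E3 : ∏' m : ℕ, (1 - q ^ m * w⁻¹) = (1 - w⁻¹) * ∏' m : ℕ, (1 - q ^ (m + 1) * w⁻¹) := by
    simpa using tprod_eq_zero_mul' (f := fun m : ℕ => 1 - q ^ m * w⁻¹) A2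
  have E4 : ∏' m : ℕ, (1 - q ^ (m + 1) * w) = (1 - q * w) * ∏' m : ℕ, (1 - q ^ (m + 2) * w) := by
    have := tprod_eq_zero_mul' (f := fun m : ℕ => 1 - q ^ (m + 1) * w)
      ((mult_aux0 hq (q * w)).congr (fun m => by ring))
    simpa using this
  have E5 : ∏' m : ℕ, ((1 - q ^ (m + 1) * w) * (1 - q ^ (m + 1) / w)) =
      (∏' m : ℕ, (1 - q ^ (m + 1) * w)) * ∏' m : ℕ, (1 - q ^ (m + 1) * w⁻¹) := by
    rw [← A1.tprod_mul A2]
    exact tprod_congr fun m => by rw [div_eq_mul_inv]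
  rw [E1, A1'.tprod_mul A0, E3, E5, E4]
  ring

private lemma hqlt0 {τ : ℂ} (hτ : 0 < τ.im) : ‖Complex.exp (2 * Real.pi * I * τ)‖ < 1 := by
  rw [Complex.norm_exp, Real.exp_lt_one_iff]
  have : (2 * (Real.pi : ℂ) * I * τ).re = -(2 * Real.pi * τ.im) := by
    simp [Complex.mul_re, Complex.mul_im]
  rw [this]
  have := Real.pi_pos
  nlinarith

lemma siegel_add_one_fst (a : ℚ × ℚ) {τ : ℂ} (hτ : 0 < τ.im) :
    siegel (a.1 + 1, a.2) τ = -Complex.exp (-(Real.pi * I) * (a.2 : ℂ)) * siegel a τ := by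
  simp only [siegel, B2]
  push_cast
  set q := Complex.exp (2 * Real.pi * I * τ) with hqdef
  set w := Complex.exp (2 * Real.pi * I * ((a.1 : ℂ) * τ + (a.2 : ℂ))) with hwdef
  have hqw : Complex.exp (2 * Real.pi * I * (((a.1 : ℂ) + 1) * τ + (a.2 : ℂ))) = q * w := by
    rw [hqdef, hwdef, ← Complex.exp_add]
    congr 1
    ring
  rw [hqw]
  have hw0 : w ≠ 0 := Complex.exp_ne_zero _
  have key := prodShift0 (q := q) (w := w) (hqlt0 hτ) (Complex.exp_ne_zero _) hw0
  have hinv : w * w⁻¹ = 1 := mul_inv_cancel₀ hw0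
  set P := ∏' (m : ℕ), (1 - q ^ (m + 1) * w) * (1 - q ^ (m + 1) / w) with hP
  set P' := ∏' (m : ℕ), (1 - q ^ (m + 1) * (q * w)) * (1 - q ^ (m + 1) / (q * w)) with hP'
  set A' := Complex.exp (Real.pi * I * (a.2 : ℂ) * ((a.1 : ℂ) + 1 - 1)) with hA'
  set B' := Complex.exp (Real.pi * I * τ * (((a.1 : ℂ) + 1) ^ 2 - ((a.1 : ℂ) + 1) + 1 / 6)) with hB'
  set A := Complex.exp (Real.pi * I * (a.2 : ℂ) * ((a.1 : ℂ) - 1)) with hA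
  set Bt := Complex.exp (Real.pi * I * τ * ((a.1 : ℂ) ^ 2 - (a.1 : ℂ) + 1 / 6)) with hBt
  set C := Complex.exp (-(Real.pi * I) * (a.2 : ℂ)) with hC
  have scalar : A' * B' * w⁻¹ = C * (A * Bt) := by
    rw [hA', hB', hA, hBt, hC, hwdef, ← Complex.exp_neg, ← Complex.exp_add, ← Complex.exp_add,
      ← Complex.exp_add, ← Complex.exp_add]
    congr 1
    ring
  linear_combination (-(A' * B')) * key + (1 - w) * P * scalar + A' * B' * P * hinv

lemma siegel_add_one_snd (a : ℚ × ℚ) {τ : ℂ} (hτ : 0 < τ.im) :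
    siegel (a.1, a.2 + 1) τ = -Complex.exp (Real.pi * I * (a.1 : ℂ)) * siegel a τ := by
  simp only [siegel, B2]
  push_cast
  set q := Complex.exp (2 * Real.pi * I * τ) with hqdef
  set w := Complex.exp (2 * Real.pi * I * ((a.1 : ℂ) * τ + (a.2 : ℂ))) with hwdef
  have hw1 : Complex.exp (2 * Real.pi * I * ((a.1 : ℂ) * τ + ((a.2 : ℂ) + 1))) = w := by
    rw [hwdef, show 2 * (Real.pi : ℂ) * I * ((a.1 : ℂ) * τ + ((a.2 : ℂ) + 1)) =
      2 * (Real.pi : ℂ) * I * ((a.1 : ℂ) * τ + (a.2 : ℂ)) + 2 * (Real.pi : ℂ) * I by ring,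
      Complex.exp_add, Complex.exp_two_pi_mul_I, mul_one]
  rw [hw1]
  have scalar : Complex.exp (Real.pi * I * ((a.2 : ℂ) + 1) * ((a.1 : ℂ) - 1)) =
      -(Complex.exp (Real.pi * I * (a.1 : ℂ)) *
        Complex.exp (Real.pi * I * (a.2 : ℂ) * ((a.1 : ℂ) - 1))) := by
    rw [show (Real.pi : ℂ) * I * ((a.2 : ℂ) + 1) * ((a.1 : ℂ) - 1) =
      (Real.pi : ℂ) * I * (a.1 : ℂ) + (Real.pi : ℂ) * I * (a.2 : ℂ) * ((a.1 : ℂ) - 1) +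
        -((Real.pi : ℂ) * I) by ring,
      Complex.exp_add, Complex.exp_add, Complex.exp_neg, Complex.exp_pi_mul_I]
    ring
  rw [scalar]
  ring

lemma siegel_neg (a : ℚ × ℚ) {τ : ℂ} (hτ : 0 < τ.im) :
    siegel (-a) τ = -siegel a τ := by
  simp only [siegel, B2, Prod.fst_neg, Prod.snd_neg]
  push_cast
  set q := Complex.exp (2 * Real.pi * I * τ) with hqdef
  set w := Complex.exp (2 * Real.pi * I * ((a.1 : ℂ) * τ + (a.2 : ℂ))) with hwdef
  have hw0 : w ≠ 0 := Complex.exp_ne_zero _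
  have hinv : w * w⁻¹ = 1 := mul_inv_cancel₀ hw0
  have hw2 : Complex.exp (2 * Real.pi * I * (-(a.1 : ℂ) * τ + -(a.2 : ℂ))) = w⁻¹ := by
    rw [hwdef, ← Complex.exp_neg]
    congr 1
    ring
  rw [hw2]
  have hprod : ∏' (m : ℕ), (1 - q ^ (m + 1) * w⁻¹) * (1 - q ^ (m + 1) / w⁻¹) =
      ∏' (m : ℕ), (1 - q ^ (m + 1) * w) * (1 - q ^ (m + 1) / w) := by
    refine tprod_congr fun m => ?_
    rw [div_eq_mul_inv, div_eq_mul_inv, inv_inv]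
    ring
  rw [hprod]
  set P := ∏' (m : ℕ), (1 - q ^ (m + 1) * w) * (1 - q ^ (m + 1) / w) with hP
  set A' := Complex.exp (Real.pi * I * -(a.2 : ℂ) * (-(a.1 : ℂ) - 1)) with hA'
  set B' := Complex.exp (Real.pi * I * τ * ((-(a.1 : ℂ)) ^ 2 - -(a.1 : ℂ) + 1 / 6)) with hB'
  set A := Complex.exp (Real.pi * I * (a.2 : ℂ) * ((a.1 : ℂ) - 1)) with hA
  set Bt := Complex.exp (Real.pi * I * τ * ((a.1 : ℂ) ^ 2 - (a.1 : ℂ) + 1 / 6)) with hBt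
  have scalar : A' * B' * w⁻¹ = A * Bt := by
    rw [hA', hB', hA, hBt, hwdef, ← Complex.exp_neg, ← Complex.exp_add, ← Complex.exp_add,
      ← Complex.exp_add]
    congr 1
    ring
  linear_combination (1 - w) * P * scalar + A' * B' * P * hinv

lemma siegel_fst_shift (a : ℚ × ℚ) {τ : ℂ} (hτ : 0 < τ.im) (n : ℤ) :
    siegel (a.1 + (n : ℚ), a.2) τ =
      (-1 : ℂ) ^ n * Complex.exp (-(Real.pi * I) * (n : ℂ) * (a.2 : ℂ)) * siegel a τ := by
  induction n using Int.induction_on with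
  | zero => simp
  | succ n ih =>
      have step := siegel_add_one_fst (a.1 + ((n : ℤ) : ℚ), a.2) hτ
      simp only at step
      rw [show a.1 + ((n : ℤ) : ℚ) + 1 = a.1 + (((n : ℤ) + 1 : ℤ) : ℚ) by push_cast; ring] at step
      rw [step, ih, zpow_add_one₀ (by norm_num : (-1 : ℂ) ≠ 0),
        show (((n : ℤ) + 1 : ℤ) : ℂ) = ((n : ℤ) : ℂ) + 1 by push_cast; ring,
        show -((Real.pi : ℂ) * I) * (((n : ℤ) : ℂ) + 1) * (a.2 : ℂ) =
          -((Real.pi : ℂ) * I) * ((n : ℤ) : ℂ) * (a.2 : ℂ) + -((Real.pi : ℂ) * I) * (a.2 : ℂ)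
          by ring, Complex.exp_add]
      ring
  | pred n ih =>
      have step := siegel_add_one_fst (a.1 + ((-(n : ℤ) - 1 : ℤ) : ℚ), a.2) hτ
      simp only at step
      rw [show a.1 + ((-(n : ℤ) - 1 : ℤ) : ℚ) + 1 = a.1 + ((-(n : ℤ) : ℤ) : ℚ) by push_cast; ring]
        at step
      refine mul_left_cancel₀ (a := -Complex.exp (-(Real.pi * I) * (a.2 : ℂ)))
        (neg_ne_zero.2 (Complex.exp_ne_zero _)) ?_
      rw [← step, ih, show (-(n : ℤ) - 1 : ℤ) = (-(n : ℤ) : ℤ) - 1 by ring,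
        zpow_sub_one₀ (by norm_num : (-1 : ℂ) ≠ 0),
        show ((-(n : ℤ) - 1 : ℤ) : ℂ) = ((-(n : ℤ) : ℤ) : ℂ) - 1 by push_cast; ring,
        show -((Real.pi : ℂ) * I) * (((-(n : ℤ) : ℤ) : ℂ) - 1) * (a.2 : ℂ) =
          -((Real.pi : ℂ) * I) * ((-(n : ℤ) : ℤ) : ℂ) * (a.2 : ℂ) + (Real.pi : ℂ) * I * (a.2 : ℂ)
          by ring, Complex.exp_add]
      have hcc : Complex.exp (-((Real.pi : ℂ) * I) * (a.2 : ℂ)) *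
          Complex.exp ((Real.pi : ℂ) * I * (a.2 : ℂ)) = 1 := by
        rw [← Complex.exp_add, show -((Real.pi : ℂ) * I) * (a.2 : ℂ) +
          (Real.pi : ℂ) * I * (a.2 : ℂ) = 0 by ring, Complex.exp_zero]
      linear_combination (-1 : ℂ) ^ (-(n : ℤ) : ℤ) * Complex.exp (-((Real.pi : ℂ) * I) *
        ((-(n : ℤ) : ℤ) : ℂ) * (a.2 : ℂ)) * (-1 : ℂ)⁻¹ * siegel a τ * hcc

lemma siegel_snd_shift (a : ℚ × ℚ) {τ : ℂ} (hτ : 0 < τ.im) (n : ℤ) :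
    siegel (a.1, a.2 + (n : ℚ)) τ =
      (-1 : ℂ) ^ n * Complex.exp (Real.pi * I * (n : ℂ) * (a.1 : ℂ)) * siegel a τ := by
  induction n using Int.induction_on with
  | zero => simp
  | succ n ih =>
      have step := siegel_add_one_snd (a.1, a.2 + ((n : ℤ) : ℚ)) hτ
      simp only at step
      rw [show a.2 + ((n : ℤ) : ℚ) + 1 = a.2 + (((n : ℤ) + 1 : ℤ) : ℚ) by push_cast; ring] at step
      rw [step, ih, zpow_add_one₀ (by norm_num : (-1 : ℂ) ≠ 0),
        show (((n : ℤ) + 1 : ℤ) : ℂ) = ((n : ℤ) : ℂ) + 1 by push_cast; ring,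
        show (Real.pi : ℂ) * I * (((n : ℤ) : ℂ) + 1) * (a.1 : ℂ) =
          (Real.pi : ℂ) * I * ((n : ℤ) : ℂ) * (a.1 : ℂ) + (Real.pi : ℂ) * I * (a.1 : ℂ)
          by ring, Complex.exp_add]
      ring
  | pred n ih =>
      have step := siegel_add_one_snd (a.1, a.2 + ((-(n : ℤ) - 1 : ℤ) : ℚ)) hτ
      simp only at step
      rw [show a.2 + ((-(n : ℤ) - 1 : ℤ) : ℚ) + 1 = a.2 + ((-(n : ℤ) : ℤ) : ℚ) by push_cast; ring]
        at step
      refine mul_left_cancel₀ (a := -Complex.exp ((Real.pi * I) * (a.1 : ℂ)))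
        (neg_ne_zero.2 (Complex.exp_ne_zero _)) ?_
      rw [← step, ih, show (-(n : ℤ) - 1 : ℤ) = (-(n : ℤ) : ℤ) - 1 by ring,
        zpow_sub_one₀ (by norm_num : (-1 : ℂ) ≠ 0),
        show ((-(n : ℤ) - 1 : ℤ) : ℂ) = ((-(n : ℤ) : ℤ) : ℂ) - 1 by push_cast; ring,
        show (Real.pi : ℂ) * I * (((-(n : ℤ) : ℤ) : ℂ) - 1) * (a.1 : ℂ) =
          (Real.pi : ℂ) * I * ((-(n : ℤ) : ℤ) : ℂ) * (a.1 : ℂ) + -((Real.pi : ℂ) * I * (a.1 : ℂ))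
          by ring, Complex.exp_add]
      have hcc : Complex.exp ((Real.pi : ℂ) * I * (a.1 : ℂ)) *
          Complex.exp (-((Real.pi : ℂ) * I * (a.1 : ℂ))) = 1 := by
        rw [← Complex.exp_add, show (Real.pi : ℂ) * I * (a.1 : ℂ) +
          -((Real.pi : ℂ) * I * (a.1 : ℂ)) = 0 by ring, Complex.exp_zero]
      linear_combination (-1 : ℂ) ^ (-(n : ℤ) : ℤ) * Complex.exp ((Real.pi : ℂ) * I *
        ((-(n : ℤ) : ℤ) : ℂ) * (a.1 : ℂ)) * (-1 : ℂ)⁻¹ * siegel a τ * hcc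

/-- elementary transformation properties of Siegel functions:
`g_{−a}(τ) = −g_a(τ)`, and for `b ∈ ℤ²`,
`g_{a+b}(τ) = (−1)^{b₁b₂+b₁+b₂} e^{−πi(b₁a₂−b₂a₁)} g_a(τ)`. -/
theorem statement0 (a : ℚ × ℚ) (ha : ¬ isIntegral a) (τ : ℂ) (hτ : 0 < τ.im) :
    siegel (-a) τ = -siegel a τ ∧
    ∀ b : ℤ × ℤ,
      siegel (a.1 + b.1, a.2 + b.2) τ =
        (-1 : ℂ) ^ (b.1 * b.2 + b.1 + b.2) *
          Complex.exp (-(Real.pi * I) * ((b.1 : ℂ) * (a.2 : ℂ) - (b.2 : ℂ) * (a.1 : ℂ))) *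
          siegel a τ := by

  refine ⟨siegel_neg a hτ, fun b => ?_⟩
  have h1 := siegel_snd_shift (a.1 + (b.1 : ℚ), a.2) hτ b.2
  simp only at h1
  have h2 := siegel_fst_shift a hτ b.1
  rw [h1, h2]
  have hcast : ((a.1 + (b.1 : ℚ) : ℚ) : ℂ) = (a.1 : ℂ) + (b.1 : ℂ) := by push_cast; ring
  rw [hcast]
  have hsplit : Complex.exp ((Real.pi : ℂ) * I * ((b.2 : ℤ) : ℂ) * ((a.1 : ℂ) + (b.1 : ℂ))) =
      Complex.exp (-((Real.pi : ℂ) * I) * ((b.1 : ℂ) * (a.2 : ℂ) - (b.2 : ℂ) * (a.1 : ℂ))) *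
        Complex.exp ((Real.pi : ℂ) * I * (b.1 : ℂ) * (a.2 : ℂ)) *
        Complex.exp (((b.1 * b.2 : ℤ) : ℂ) * ((Real.pi : ℂ) * I)) := by
    rw [← Complex.exp_add, ← Complex.exp_add]
    congr 1
    push_cast
    ring
  have hm : Complex.exp (((b.1 * b.2 : ℤ) : ℂ) * ((Real.pi : ℂ) * I)) =
      (-1 : ℂ) ^ (b.1 * b.2) := by
    rw [Complex.exp_int_mul, Complex.exp_pi_mul_I]
  have hcc : Complex.exp (-((Real.pi : ℂ) * I) * ((b.1 : ℤ) : ℂ) * (a.2 : ℂ)) *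
      Complex.exp ((Real.pi : ℂ) * I * ((b.1 : ℤ) : ℂ) * (a.2 : ℂ)) = 1 := by
    rw [← Complex.exp_add, show -((Real.pi : ℂ) * I) * ((b.1 : ℤ) : ℂ) * (a.2 : ℂ) +
      (Real.pi : ℂ) * I * ((b.1 : ℤ) : ℂ) * (a.2 : ℂ) = 0 by ring, Complex.exp_zero]
  rw [hsplit, hm, show b.1 * b.2 + b.1 + b.2 = (b.1 * b.2 + b.1) + b.2 by ring,
    zpow_add₀ (by norm_num : (-1 : ℂ) ≠ 0), zpow_add₀ (by norm_num : (-1 : ℂ) ≠ 0)]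
  linear_combination ((-1 : ℂ) ^ (b.1 * b.2) * (-1 : ℂ) ^ b.1 * (-1 : ℂ) ^ b.2 *
    Complex.exp (-((Real.pi : ℂ) * I) * ((b.1 : ℂ) * (a.2 : ℂ) - (b.2 : ℂ) * (a.1 : ℂ))) *
    siegel a τ) * hcc


end SiegelPaper
end
end

section
/- For every k ∈ {0,…,p−2} there exists ζ ∈ ℂ with ζ¹² = 1 such that for all 0 ≤ i ≤ n−1 and all τ ∈ ℍ: E_i(τ + α^k) = ζ^p · (−1)^{α^{i+k}} · e^{πi α^{2i+k}/p} · E_i(τ) and F_i(τ + α^k) = ζ · F_i(τ). -/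
noncomputable section

open Complex Filter Matrix

namespace SiegelPaper

private lemma auxring (e1 e2 e1' e2' eC Z Pr : ℂ) (key : e1 * e2 = eC * (e1' * e2')) :
    -e1 * e2 * Z * Pr = eC * (-e1' * e2' * Z * Pr) := by
  linear_combination (-(Z * Pr)) * key

private lemma auxring2 (e1 e1' eM e2 Z Pr : ℂ) (key : e1 = eM * e1') :
    -e1 * e2 * Z * Pr = eM * (-e1' * e2 * Z * Pr) := by
  linear_combination (-(e2 * Z * Pr)) * key

lemma siegel_shift (a : ℚ × ℚ) (c : ℤ) (τ : ℂ) :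
    siegel a (τ + (c : ℂ)) =
      Complex.exp (Real.pi * I * (c : ℂ) / 6) * siegel (a.1, a.2 + a.1 * (c : ℚ)) τ := by
  unfold siegel
  have hq : Complex.exp (2 * (Real.pi : ℂ) * I * (τ + (c : ℂ))) =
      Complex.exp (2 * (Real.pi : ℂ) * I * τ) := by
    rw [show 2 * (Real.pi : ℂ) * I * (τ + (c : ℂ)) =
        2 * (Real.pi : ℂ) * I * τ + (c : ℂ) * (2 * Real.pi * I) by ring,
      Complex.exp_add, Complex.exp_int_mul_two_pi_mul_I, mul_one]
  have hz : Complex.exp (2 * (Real.pi : ℂ) * I * ((a.1 : ℂ) * (τ + (c : ℂ)) + (a.2 : ℂ))) =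
      Complex.exp (2 * (Real.pi : ℂ) * I * ((a.1 : ℂ) * τ + (((a.2 + a.1 * (c : ℚ)) : ℚ) : ℂ))) := by
    congr 1
    push_cast
    ring
  rw [hq, hz]
  exact auxring _ _ _ _ _ _ _ (by
    rw [← Complex.exp_add, ← Complex.exp_add, ← Complex.exp_add]
    congr 1
    unfold B2
    push_cast
    ring)

lemma siegel_snd_add_int (a₁ a₂ : ℚ) (m : ℤ) (τ : ℂ) :
    siegel (a₁, a₂ + (m : ℚ)) τ =
      Complex.exp (Real.pi * I * (m : ℂ) * ((a₁ : ℂ) - 1)) * siegel (a₁, a₂) τ := by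
  unfold siegel
  have hz : Complex.exp (2 * (Real.pi : ℂ) * I * ((a₁ : ℂ) * τ + (((a₂ + (m : ℚ)) : ℚ) : ℂ))) =
      Complex.exp (2 * (Real.pi : ℂ) * I * ((a₁ : ℂ) * τ + (a₂ : ℂ))) := by
    rw [show 2 * (Real.pi : ℂ) * I * ((a₁ : ℂ) * τ + (((a₂ + (m : ℚ)) : ℚ) : ℂ)) =
        2 * (Real.pi : ℂ) * I * ((a₁ : ℂ) * τ + (a₂ : ℂ)) + (m : ℂ) * (2 * Real.pi * I) by
          push_cast; ring,
      Complex.exp_add, Complex.exp_int_mul_two_pi_mul_I, mul_one]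
  rw [hz]
  exact auxring2 _ _ _ _ _ _ (by
    rw [← Complex.exp_add]
    congr 1
    push_cast
    ring)

section Residues
set_option linter.unusedSectionVars false
variable {p : ℕ} [NeZero p] (hp : p.Prime) (hp5 : 5 ≤ p) {α : ℤ}
  (hα : orderOf (α : ZMod p) = p - 1)

include hp hp5 hα in
lemma inj_pow : ∀ j1 ∈ Finset.range (p - 1), ∀ j2 ∈ Finset.range (p - 1),
    (α : ZMod p) ^ j1 = (α : ZMod p) ^ j2 → j1 = j2 := by
  haveI : Fact p.Prime := ⟨hp⟩
  have h0 : (α : ZMod p) ≠ 0 := by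
    intro h
    have h1 : (α : ZMod p) ^ (p - 1) = 1 := by rw [← hα]; exact pow_orderOf_eq_one _
    rw [h, zero_pow (by omega : p - 1 ≠ 0)] at h1
    exact zero_ne_one h1
  have hu : IsUnit (α : ZMod p) := isUnit_iff_ne_zero.mpr h0
  have hou : orderOf hu.unit = p - 1 := by rw [← hα, ← orderOf_units, hu.unit_spec]
  intro j1 h1 j2 h2 h
  rw [Finset.mem_range] at h1 h2
  refine pow_injOn_Iio_orderOf (x := hu.unit) ?_ ?_ ?_
  · rw [Set.mem_Iio, hou]; exact h1
  · rw [Set.mem_Iio, hou]; exact h2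
  · have : ((hu.unit ^ j1 : (ZMod p)ˣ) : ZMod p) = ((hu.unit ^ j2 : (ZMod p)ˣ) : ZMod p) := by
      simpa [hu.unit_spec] using h
    exact_mod_cast this

include hp hp5 hα in
lemma image_pow_eq :
    (Finset.range (p - 1)).image (fun j => (α : ZMod p) ^ j) = Finset.univ.erase 0 := by
  haveI : Fact p.Prime := ⟨hp⟩
  have h0 : (α : ZMod p) ≠ 0 := by
    intro h
    have h1 : (α : ZMod p) ^ (p - 1) = 1 := by rw [← hα]; exact pow_orderOf_eq_one _
    rw [h, zero_pow (by omega : p - 1 ≠ 0)] at h1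
    exact zero_ne_one h1
  have hu : IsUnit (α : ZMod p) := isUnit_iff_ne_zero.mpr h0
  apply Finset.eq_of_subset_of_card_le
  · intro x hx
    rw [Finset.mem_image] at hx
    obtain ⟨j, _, rfl⟩ := hx
    refine Finset.mem_erase.mpr ⟨?_, Finset.mem_univ _⟩
    rw [← hu.unit_spec, ← Units.val_pow_eq_pow_val]
    exact Units.ne_zero _
  · apply le_of_eq
    rw [Finset.card_image_of_injOn (fun j1 h1 j2 h2 h => inj_pow hp hp5 hα j1 h1 j2 h2 h),
      Finset.card_range, Finset.card_erase_of_mem (Finset.mem_univ _), Finset.card_univ,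
      ZMod.card]

variable {M : Type*}

include hp hp5 hα in
lemma prod_residues [CommMonoid M] (g : ZMod p → M) :
    g 0 * ∏ j ∈ Finset.range (p - 1), g ((α : ZMod p) ^ j) = ∏ x : ZMod p, g x := by
  rw [← Finset.prod_image (inj_pow hp hp5 hα), image_pow_eq hp hp5 hα,
    Finset.mul_prod_erase Finset.univ g (Finset.mem_univ 0)]

include hp hp5 hα in
lemma sum_residues [AddCommMonoid M] (g : ZMod p → M) :
    g 0 + ∑ j ∈ Finset.range (p - 1), g ((α : ZMod p) ^ j) = ∑ x : ZMod p, g x := by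
  rw [← Finset.sum_image (inj_pow hp hp5 hα), image_pow_eq hp hp5 hα,
    Finset.add_sum_erase Finset.univ g (Finset.mem_univ 0)]

end Residues

/-- transformation of `E_i` and `F_i` under `τ ↦ τ + α^k`
(the action of `γ_k = [[1,α^k],[0,1]]`): there is a 12th root of unity `ζ`
(depending only on `k`) with
`E_i(τ + α^k) = ζ^p·(−1)^{α^{i+k}}·e^{πi α^{2i+k}/p}·E_i(τ)` and
`F_i(τ + α^k) = ζ·F_i(τ)`. -/
theorem statement3 (p : ℕ) (hp : p.Prime) (hp5 : 5 ≤ p) (α : ℤ)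
    (hα : orderOf (α : ZMod p) = p - 1) (n : ℕ) (hn : n = (p - 1) / 2)
    (k : ℕ) (hk : k ≤ p - 2) :
    ∃ ζ : ℂ, ζ ^ 12 = 1 ∧
      ∀ i ≤ n - 1, ∀ τ : ℂ, 0 < τ.im →
        E p α i (τ + (α : ℂ) ^ k) =
          ζ ^ p * (-1 : ℂ) ^ (α ^ (i + k)) *
            Complex.exp (Real.pi * I * (α : ℂ) ^ (2 * i + k) / (p : ℂ)) * E p α i τ ∧
        F p α i (τ + (α : ℂ) ^ k) = ζ * F p α i τ := by
  haveI : Fact p.Prime := ⟨hp⟩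
  haveI : NeZero p := ⟨hp.pos.ne'⟩
  have hpQ : (p : ℚ) ≠ 0 := by exact_mod_cast hp.pos.ne'
  have hpC : (p : ℂ) ≠ 0 := by exact_mod_cast hp.pos.ne'
  have hpZ : (p : ℤ) ≠ 0 := by exact_mod_cast hp.pos.ne'
  set c : ℤ := α ^ k with hc
  have hcC : ((c : ℤ) : ℂ) = (α : ℂ) ^ k := by rw [hc]; push_cast; ring
  refine ⟨Complex.exp (Real.pi * I * (c : ℂ) / 6), ?_, ?_⟩
  · rw [← Complex.exp_nat_mul,
      show ((12 : ℕ) : ℂ) * (Real.pi * I * (c : ℂ) / 6) = (c : ℂ) * (2 * Real.pi * I) by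
        push_cast; ring]
    exact Complex.exp_int_mul_two_pi_mul_I c
  intro i hi τ hτ
  constructor
  · -- E case
    set s : ℤ := α ^ (i + k) with hs
    set A : ℚ := (α : ℚ) ^ i / (p : ℚ) with hA
    set T : ℤ → ℂ := fun v => siegel (A, (v : ℚ) / (p : ℚ)) τ with hT
    set G : ZMod p → ℂ := fun x => T ((x.val : ℤ)) with hG
    set φ : ℤ → ℂ := fun v =>
      Complex.exp (Real.pi * I * (((v / (p : ℤ) : ℤ)) : ℂ) * ((A : ℂ) - 1)) with hφ
    have key : ∀ v : ℤ, T v = φ v * G ((v : ZMod p)) := by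
      intro v
      have hval : (((v : ZMod p).val : ℤ)) = v % p := ZMod.val_intCast v
      have h2 : (v : ℚ) / (p : ℚ) =
          (((v : ZMod p).val : ℤ) : ℚ) / (p : ℚ) + ((v / (p : ℤ) : ℤ) : ℚ) := by
        rw [hval, div_add' _ _ _ hpQ]
        congr 1
        have hid : v % (p : ℤ) + v / (p : ℤ) * (p : ℤ) = v := by
          rw [mul_comm (v / (p : ℤ))]; exact Int.emod_add_mul_ediv v p
        exact_mod_cast hid.symm
      simp only [hT, hG]
      rw [h2, siegel_snd_add_int]
    -- product over a complete residue system
    have hprod : ∀ b : ℤ, T b * ∏ j ∈ Finset.range (p - 1), T (α ^ j + b) =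
        (φ b * ∏ j ∈ Finset.range (p - 1), φ (α ^ j + b)) * ∏ x : ZMod p, G x := by
      intro b
      have h1 : ∀ j : ℕ, T (α ^ j + b) =
          φ (α ^ j + b) * G ((α : ZMod p) ^ j + (b : ZMod p)) := by
        intro j
        rw [key (α ^ j + b),
          show ((α ^ j + b : ℤ) : ZMod p) = (α : ZMod p) ^ j + (b : ZMod p) by push_cast; ring]
      rw [key b, Finset.prod_congr rfl (fun j _ => h1 j), Finset.prod_mul_distrib]
      have h2 : G ((b : ZMod p)) * ∏ j ∈ Finset.range (p - 1),
          G ((α : ZMod p) ^ j + (b : ZMod p)) = ∏ x : ZMod p, G x := by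
        have h3 := prod_residues hp hp5 hα (fun x => G (x + (b : ZMod p)))
        simp only [zero_add] at h3
        rw [h3]
        exact Fintype.prod_equiv (Equiv.addRight ((b : ZMod p))) _ _ (fun x => rfl)
      calc φ b * G ((b : ZMod p)) *
            ((∏ j ∈ Finset.range (p - 1), φ (α ^ j + b)) *
              ∏ j ∈ Finset.range (p - 1), G ((α : ZMod p) ^ j + (b : ZMod p)))
          = (φ b * ∏ j ∈ Finset.range (p - 1), φ (α ^ j + b)) *
            (G ((b : ZMod p)) * ∏ j ∈ Finset.range (p - 1),
              G ((α : ZMod p) ^ j + (b : ZMod p))) := by ring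
        _ = _ := by rw [h2]
    -- sums of values over a complete residue system
    have hVsum : ∀ b : ℤ, (((b : ZMod p)).val : ℤ) +
        ∑ j ∈ Finset.range (p - 1), ((((α ^ j + b : ℤ) : ZMod p)).val : ℤ) =
        ∑ x : ZMod p, ((x.val : ℤ)) := by
      intro b
      have h := sum_residues hp hp5 hα (fun x => (((x + (b : ZMod p)).val : ℤ)))
      simp only [zero_add] at h
      have hshift : ∑ x : ZMod p, (((x + (b : ZMod p)).val : ℤ)) = ∑ x : ZMod p, ((x.val : ℤ)) :=
        Fintype.sum_equiv (Equiv.addRight ((b : ZMod p)))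
          (fun x => (((x + (b : ZMod p)).val : ℤ))) (fun x => ((x.val : ℤ))) (fun x => rfl)
      rw [hshift] at h
      rw [← h]
      congr 1
      refine Finset.sum_congr rfl (fun j _ => ?_)
      rw [show ((α ^ j + b : ℤ) : ZMod p) = (α : ZMod p) ^ j + (b : ZMod p) by push_cast; ring]
    have hdiv : ∀ v : ℤ, (p : ℤ) * (v / (p : ℤ)) = v - (((v : ZMod p)).val : ℤ) := by
      intro v
      have h := Int.emod_add_mul_ediv v (p : ℤ)
      rw [ZMod.val_intCast]
      linarith
    -- the integer divisions identity
    have hsum : (s / (p : ℤ)) + ∑ j ∈ Finset.range (p - 1), ((α ^ j + s) / (p : ℤ)) =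
        s + (((0 : ℤ) / (p : ℤ)) + ∑ j ∈ Finset.range (p - 1), ((α ^ j : ℤ) / (p : ℤ))) := by
      apply mul_left_cancel₀ hpZ
      rw [mul_add, mul_add, mul_add, Finset.mul_sum, Finset.mul_sum]
      simp only [hdiv]
      rw [Finset.sum_sub_distrib, Finset.sum_sub_distrib, Finset.sum_add_distrib,
        Finset.sum_const, Finset.card_range, nsmul_eq_mul]
      have h1 := hVsum s
      have h2 := hVsum 0
      have hcast : ((p - 1 : ℕ) : ℤ) = (p : ℤ) - 1 := by
        have := hp.one_le; omega
      rw [hcast]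
      push_cast [ZMod.val_zero, add_zero] at h1 h2 ⊢
      linarith [h1, h2]
    -- relate E at τ to T-products
    have hE1 : E p α i τ = T 0 * ∏ j ∈ Finset.range (p - 1), T (α ^ j) := by
      unfold E
      simp only [hT, ← hA]
      congr 1
      · norm_num
      · exact Finset.prod_congr rfl (fun j _ => by norm_cast)
    have hE2 : E p α i (τ + (α : ℂ) ^ k) =
        Complex.exp (Real.pi * I * (c : ℂ) / 6) ^ p *
          (T s * ∏ j ∈ Finset.range (p - 1), T (α ^ j + s)) := by
      unfold E
      rw [← hcC, siegel_shift, Finset.prod_congr rfl (fun j _ => siegel_shift _ c τ),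
        Finset.prod_mul_distrib, Finset.prod_const, Finset.card_range]
      have e1 : siegel ((A, 0).1, (A, 0).2 + (A, 0).1 * (c : ℚ)) τ = T s := by
        simp only [hT]
        congr 2
        simp only [hs, hc, hA]
        push_cast [pow_add]
        ring
      have e2 : ∀ j : ℕ, siegel ((A, (α : ℚ) ^ j / (p : ℚ)).1,
          (A, (α : ℚ) ^ j / (p : ℚ)).2 + (A, (α : ℚ) ^ j / (p : ℚ)).1 * (c : ℚ)) τ
          = T (α ^ j + s) := by
        intro j
        simp only [hT]
        congr 2
        simp only [hs, hc, hA]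
        push_cast [pow_add]
        ring
      rw [e1, Finset.prod_congr rfl (fun j _ => e2 j)]
      have hpp : Complex.exp (Real.pi * I * (c : ℂ) / 6) *
          Complex.exp (Real.pi * I * (c : ℂ) / 6) ^ (p - 1) =
          Complex.exp (Real.pi * I * (c : ℂ) / 6) ^ p := by
        rw [← pow_succ']
        congr 1
        omega
      calc Complex.exp (Real.pi * I * (c : ℂ) / 6) * T s *
            (Complex.exp (Real.pi * I * (c : ℂ) / 6) ^ (p - 1) *
              ∏ j ∈ Finset.range (p - 1), T (α ^ j + s))
          = (Complex.exp (Real.pi * I * (c : ℂ) / 6) *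
              Complex.exp (Real.pi * I * (c : ℂ) / 6) ^ (p - 1)) *
            (T s * ∏ j ∈ Finset.range (p - 1), T (α ^ j + s)) := by ring
        _ = _ := by rw [hpp]
    -- the φ-product ratio
    have hlin : ∀ f : ℕ → ℤ,
        ∑ j ∈ Finset.range (p - 1), (Real.pi * I * ((f j : ℂ)) * ((A : ℂ) - 1)) =
        Real.pi * I * ((A : ℂ) - 1) * (((∑ j ∈ Finset.range (p - 1), f j : ℤ)) : ℂ) := by
      intro f
      push_cast
      rw [Finset.mul_sum]
      exact Finset.sum_congr rfl (fun j _ => by ring)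
    have hratio : φ s * ∏ j ∈ Finset.range (p - 1), φ (α ^ j + s) =
        Complex.exp (Real.pi * I * (s : ℂ) * ((A : ℂ) - 1)) *
          (φ 0 * ∏ j ∈ Finset.range (p - 1), φ (α ^ j)) := by
      simp only [hφ]
      rw [← Complex.exp_sum, ← Complex.exp_sum, ← Complex.exp_add, ← Complex.exp_add,
        ← Complex.exp_add]
      congr 1
      rw [hlin (fun j => (α ^ j + s) / (p : ℤ)), hlin (fun j => (α ^ j : ℤ) / (p : ℤ))]
      have hzC := congrArg (fun z : ℤ => (z : ℂ)) hsum
      push_cast at hzC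
      push_cast
      linear_combination (Real.pi * I * ((A : ℂ) - 1)) * hzC
    -- the phase identity
    have hphase : Complex.exp (Real.pi * I * (s : ℂ) * ((A : ℂ) - 1)) =
        (-1 : ℂ) ^ (α ^ (i + k)) *
          Complex.exp (Real.pi * I * (α : ℂ) ^ (2 * i + k) / (p : ℂ)) := by
      rw [show Real.pi * I * (s : ℂ) * ((A : ℂ) - 1) =
          Real.pi * I * (α : ℂ) ^ (2 * i + k) / (p : ℂ) + (s : ℂ) * (Real.pi * I) +
            ((-s : ℤ) : ℂ) * (2 * Real.pi * I) by
        simp only [hs, hA]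
        push_cast [pow_add]
        field_simp
        ring]
      rw [Complex.exp_add, Complex.exp_add, Complex.exp_int_mul_two_pi_mul_I, mul_one,
        Complex.exp_int_mul, Complex.exp_pi_mul_I, hs]
      ring
    have h0 := hprod 0
    simp only [add_zero] at h0
    rw [hE2, hprod s, hratio, hphase, hE1, h0]
    ring
  · -- F case
    show F p α i (τ + (α : ℂ) ^ k) = _
    unfold F
    rw [← hcC, siegel_shift]
    norm_num

end SiegelPaper
end
end

section
/- ∑_{i=0}^{n−1} a_i = −n/12, where a_i = (p/2)·B₂({α^i/p}); equivalently, ∑_{i=0}^{n−1} B₂({α^i/p}) = −n/(6p). -/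
noncomputable section

open Complex Filter Matrix

namespace SiegelPaper

lemma sum_sq (m : ℕ) : ∑ a ∈ Finset.range m, (a:ℝ)^2 = m*(m-1)*(2*m-1)/6 := by
  induction m with
  | zero => simp
  | succ k ih => rw [Finset.sum_range_succ, ih]; push_cast; ring

lemma sum_id (m : ℕ) : ∑ a ∈ Finset.range m, (a:ℝ) = m*(m-1)/2 := by
  induction m with
  | zero => simp
  | succ k ih => rw [Finset.sum_range_succ, ih]; push_cast; ring

/-- `∑_{i=0}^{n−1} a_i = −n/12`, where `a_i = (p/2)·B₂({αⁱ/p})`. -/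
theorem statement6 (p n : ℕ) (hp : p.Prime) (hp5 : 5 ≤ p) (hn : n = (p - 1) / 2)
    (α : ℤ) (hα : orderOf (α : ZMod p) = p - 1) :
    ∑ i ∈ Finset.range n, ((p : ℝ) / 2) * B2R (Int.fract ((α : ℝ) ^ i / (p : ℝ))) =
      -(n : ℝ) / 12 := by
  haveI : Fact p.Prime := ⟨hp⟩
  have hp0 : (0:ℝ) < p := by positivity
  have hpe : p = 2 * n + 1 := by
    have hodd : Odd p := hp.odd_of_ne_two (by omega)
    obtain ⟨k, hk⟩ := hodd
    omega
  set A : ZMod p := (α : ZMod p) with hA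
  have hA1 : A ^ (p - 1) = 1 := by rw [← hα]; exact pow_orderOf_eq_one A
  have hAne : A ≠ 0 := by
    intro h
    have : A * A ^ (p - 2) = 1 := by
      rw [← pow_succ']
      have : p - 2 + 1 = p - 1 := by omega
      rw [this, hA1]
    exact (IsUnit.of_mul_eq_one _ this).ne_zero h
  -- fract equals val/p
  have hfract : ∀ i : ℕ, Int.fract ((α : ℝ) ^ i / (p : ℝ)) = ((A ^ i).val : ℝ) / p := by
    intro i
    have hval : ((A ^ i).val : ℤ) = (α ^ i) % (p : ℤ) := by
      rw [hA, ← Int.cast_pow, ZMod.val_intCast]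
    have hdm : (α ^ i : ℤ) = p * ((α ^ i) / p) + (α ^ i) % p := (Int.mul_ediv_add_emod _ _).symm
    have hvalR : ((A ^ i).val : ℝ) = ((α ^ i % (p:ℤ) : ℤ) : ℝ) := by exact_mod_cast hval
    have : (α : ℝ) ^ i / p = ((α ^ i / (p:ℤ) : ℤ) : ℝ) + ((A ^ i).val : ℝ) / p := by
      rw [hvalR]
      have h2 := congrArg (fun z : ℤ => (z : ℝ)) hdm
      push_cast at h2 ⊢
      field_simp
      linarith [h2]
    rw [this, Int.fract_intCast_add, Int.fract_eq_self.mpr]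
    constructor
    · positivity
    · rw [div_lt_one hp0]
      exact_mod_cast (A ^ i).val_lt
  simp only [hfract]
  -- the function
  set g : ZMod p → ℝ := fun x => B2R ((x.val : ℝ) / p) with hg
  -- sum over all powers = sum over nonzero elements
  have hinj : Set.InjOn (fun i => A ^ i) (Set.Iio (p - 1)) := by
    rw [← hα]; exact pow_injOn_Iio_orderOf
  have himage : (Finset.range (p - 1)).image (fun i => A ^ i) = Finset.univ.erase 0 := by
    apply Finset.eq_of_subset_of_card_le
    · intro x hx
      simp only [Finset.mem_image, Finset.mem_range] at hx
      obtain ⟨i, _, rfl⟩ := hx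
      exact Finset.mem_erase.mpr ⟨pow_ne_zero _ hAne, Finset.mem_univ _⟩
    · rw [Finset.card_erase_of_mem (Finset.mem_univ _), Finset.card_univ, ZMod.card,
        Finset.card_image_of_injOn (fun a ha b hb h => hinj (by simpa using ha) (by simpa using hb) h),
        Finset.card_range]
  have hsum1 : ∑ i ∈ Finset.range (p - 1), g (A ^ i) = ∑ x ∈ Finset.univ.erase 0, g x := by
    rw [← himage, Finset.sum_image
      (fun a ha b hb h => hinj (by simpa using ha) (by simpa using hb) h)]
  -- A ^ n = -1
  have hAn : A ^ n = -1 := by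
    have h2 : A ^ n * A ^ n = 1 := by
      rw [← pow_add]
      have : n + n = p - 1 := by omega
      rw [this, hA1]
    rcases mul_self_eq_one_iff.mp h2 with h | h
    · exfalso
      have := orderOf_dvd_of_pow_eq_one h
      rw [hα] at this
      have hn0 : 0 < n := by omega
      have := Nat.le_of_dvd hn0 this
      omega
    · exact h
  -- g (-x) = g x for x ≠ 0
  have hgneg : ∀ x : ZMod p, x ≠ 0 → g (-x) = g x := by
    intro x hx
    have hv : (-x).val = p - x.val := by rw [ZMod.neg_val, if_neg hx]
    have hvle : x.val ≤ p := le_of_lt x.val_lt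
    have hcast : (((-x).val : ℝ)) = p - x.val := by
      rw [hv]; push_cast [hvle]; ring
    simp only [hg, B2R, hcast]
    field_simp
    ring
  -- halving
  have hsplit : ∑ i ∈ Finset.range (p - 1), g (A ^ i)
      = 2 * ∑ i ∈ Finset.range n, g (A ^ i) := by
    have hp1 : p - 1 = n + n := by omega
    rw [hp1, Finset.sum_range_add]
    have : ∀ i ∈ Finset.range n, g (A ^ (n + i)) = g (A ^ i) := by
      intro i _
      rw [pow_add, hAn, neg_one_mul]
      exact hgneg _ (pow_ne_zero _ hAne)
    rw [Finset.sum_congr rfl this]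
    ring
  -- total sum over ZMod p
  have htotal : ∑ x : ZMod p, g x = 1 / (6 * p) := by
    have : ∑ x : ZMod p, g x = ∑ a ∈ Finset.range p, B2R ((a : ℝ) / p) := by
      refine Finset.sum_nbij' (fun x => x.val) (fun a => (a : ZMod p)) ?_ ?_ ?_ ?_ ?_
      · intro x _; exact Finset.mem_range.mpr x.val_lt
      · intro a _; exact Finset.mem_univ _
      · intro x _; exact ZMod.natCast_rightInverse x
      · intro a ha; exact ZMod.val_cast_of_lt (Finset.mem_range.mp ha)
      · intro x _; rfl
    rw [this]
    simp only [B2R, div_pow]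
    rw [Finset.sum_add_distrib, Finset.sum_sub_distrib]
    rw [← Finset.sum_div, ← Finset.sum_div, sum_sq, sum_id, Finset.sum_const,
      Finset.card_range, nsmul_eq_mul]
    have hpne : (p:ℝ) ≠ 0 := ne_of_gt hp0
    field_simp
    ring
  have herase : ∑ x ∈ Finset.univ.erase 0, g x = (∑ x : ZMod p, g x) - g 0 := by
    rw [eq_sub_iff_add_eq, Finset.sum_erase_add _ _ (Finset.mem_univ 0)]
  have hg0 : g 0 = 1 / 6 := by simp [hg, B2R]
  -- conclude
  rw [← Finset.mul_sum]
  have hS : ∑ i ∈ Finset.range n, g (A ^ i) = (1 / (6 * p) - 1 / 6) / 2 := by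
    have := hsum1
    rw [hsplit, herase, htotal, hg0] at this
    linarith
  have : ∑ i ∈ Finset.range n, B2R (((A ^ i).val : ℝ) / p) = (1 / (6 * p) - 1 / 6) / 2 := hS
  rw [this]
  have hpn : (p : ℝ) = 2 * n + 1 := by exact_mod_cast congrArg (Nat.cast : ℕ → ℝ) hpe
  rw [hpn]
  have h2 : (2 * (n:ℝ) + 1) ≠ 0 := by positivity
  field_simp
  ring

end SiegelPaper
end
end

section
/- Let N be the n×n real matrix with entries N_{ij} = a_{(i+j) mod n} − 1/12 for 0 ≤ i,j ≤ n−1. Then |det N| = (n/6) · ∏_χ |(1/4)·B_{2,χ}|, where the product runs over all even non-principal Dirichlet characters χ modulo p. -/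
noncomputable section

open Complex Filter Matrix

namespace SiegelPaper

section Aux
open Finset

-- transfer lemma
lemma pow_transfer {G H : Type*} [Group G] [Group H] {g : G} {ζ : H} {m : ℕ}
    (hg : orderOf g = m) (hζ : ζ ^ m = 1) {a b : ℕ} (hab : g ^ a = g ^ b) :
    ζ ^ a = ζ ^ b := by
  have h1 : a ≡ b [MOD m] := hg ▸ pow_eq_pow_iff_modEq.mp hab
  exact pow_eq_pow_iff_modEq.mpr (h1.of_dvd (orderOf_dvd_of_pow_eq_one hζ))

noncomputable def genChar {G H : Type*} [Group G] [CommGroup H] (g : G) (m : ℕ)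
    (hg : orderOf g = m) (hgen : ∀ u : G, ∃ k : ℕ, g ^ k = u) (ζ : H) (hζ : ζ ^ m = 1) :
    G →* H where
  toFun u := ζ ^ Exists.choose (hgen u)
  map_one' := by
    have : ζ ^ Exists.choose (hgen 1) = ζ ^ (0:ℕ) :=
      pow_transfer hg hζ (by rw [Exists.choose_spec (hgen 1), pow_zero])
    simpa using this
  map_mul' u v := by
    have h : g ^ Exists.choose (hgen (u*v)) = g ^ (Exists.choose (hgen u) + Exists.choose (hgen v)) := by
      rw [Exists.choose_spec (hgen (u*v)), pow_add, Exists.choose_spec (hgen u), Exists.choose_spec (hgen v)]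
    rw [← pow_add]
    exact pow_transfer hg hζ h

lemma genChar_apply {G H : Type*} [Group G] [CommGroup H] (g : G) (m : ℕ)
    (hg : orderOf g = m) (hgen : ∀ u : G, ∃ k : ℕ, g ^ k = u) (ζ : H) (hζ : ζ ^ m = 1)
    (k : ℕ) (u : G) (hu : g ^ k = u) : genChar g m hg hgen ζ hζ u = ζ ^ k :=
  pow_transfer hg hζ (by rw [Exists.choose_spec (hgen u), ← hu])

lemma sum_id_c (k : ℕ) : ∑ i ∈ range k, (i:ℂ) = k*(k-1)/2 := by
  induction k with
  | zero => simp
  | succ k ih => rw [sum_range_succ, ih]; push_cast; ring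

lemma sum_sq_c (k : ℕ) : ∑ i ∈ range k, (i:ℂ)^2 = k*(k-1)*(2*k-1)/6 := by
  induction k with
  | zero => simp
  | succ k ih => rw [sum_range_succ, ih]; push_cast; ring

lemma units_gen {p : ℕ} (hp : p.Prime) {α : ℤ} (hα : orderOf (α : ZMod p) = p - 1) :
    ∃ αu : (ZMod p)ˣ, (αu : ZMod p) = (α : ZMod p) ∧ orderOf αu = p - 1 ∧
      ∀ u : (ZMod p)ˣ, ∃ k : ℕ, αu ^ k = u := by
  haveI : Fact p.Prime := ⟨hp⟩
  have hp1 : 1 < p := hp.one_lt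
  have h1 : (α : ZMod p) ^ (p - 1) = 1 := hα ▸ pow_orderOf_eq_one _
  have hz : (α : ZMod p) ≠ 0 := by
    intro h
    rw [h, zero_pow (by omega)] at h1
    exact zero_ne_one h1
  have hu : IsUnit (α : ZMod p) := isUnit_iff_ne_zero.mpr hz
  refine ⟨hu.unit, hu.unit_spec, ?_, ?_⟩
  · rw [← orderOf_units, hu.unit_spec]; exact hα
  · have hord : orderOf hu.unit = p - 1 := by rw [← orderOf_units, hu.unit_spec]; exact hα
    have htop : Subgroup.zpowers hu.unit = ⊤ := by
      apply Subgroup.eq_top_of_card_eq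
      rw [Nat.card_zpowers, hord, Nat.card_eq_fintype_card, ZMod.card_units_eq_totient,
        Nat.totient_prime hp]
    intro u
    have hmem : u ∈ Submonoid.powers hu.unit := by
      rw [mem_powers_iff_mem_zpowers, htop]; trivial
    obtain ⟨k, hk⟩ := hmem
    exact ⟨k, hk⟩

lemma sum_reindex_pow {p : ℕ} (hp : p.Prime) {α : ℤ} (hα : orderOf (α : ZMod p) = p - 1)
    {M : Type*} [AddCommMonoid M] (f : ℕ → M) :
    ∑ x ∈ Finset.Icc 1 (p-1), f x = ∑ t ∈ Finset.range (p-1), f (((α : ZMod p) ^ t).val) := by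
  haveI : Fact p.Prime := ⟨hp⟩
  have hp1 : 1 < p := hp.one_lt
  obtain ⟨αu, hcoe, hord, hgen⟩ := units_gen hp hα
  have hz : ∀ t : ℕ, (α : ZMod p) ^ t ≠ 0 := by
    intro t
    apply pow_ne_zero
    intro h
    rw [← hcoe] at h
    exact (Units.ne_zero αu) h
  refine (Finset.sum_bij (fun t _ => ((α : ZMod p) ^ t).val) ?_ ?_ ?_ ?_).symm
  · intro t _
    show ((α : ZMod p) ^ t).val ∈ Finset.Icc 1 (p-1)
    rw [Finset.mem_Icc]
    constructor
    · exact Nat.one_le_iff_ne_zero.mpr (fun h => hz t ((ZMod.val_eq_zero _).mp h))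
    · have := ZMod.val_lt ((α : ZMod p) ^ t); omega
  · intro a ha b hb hab
    simp only [Finset.mem_range] at ha hb
    have h1 : (α : ZMod p) ^ a = (α : ZMod p) ^ b := ZMod.val_injective _ hab
    have h2 : αu ^ a = αu ^ b := by
      apply Units.ext
      rw [Units.val_pow_eq_pow_val, Units.val_pow_eq_pow_val, hcoe]
      exact h1
    exact pow_injOn_Iio_orderOf (by rwa [Set.mem_Iio, hord]) (by rwa [Set.mem_Iio, hord]) h2
  · intro b hb
    rw [Finset.mem_Icc] at hb
    have hbu : IsUnit ((b : ℕ) : ZMod p) := by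
      apply isUnit_iff_ne_zero.mpr
      intro h
      have : ((b : ℕ) : ZMod p).val = b := ZMod.val_cast_of_lt (by omega)
      rw [h, ZMod.val_zero] at this
      omega
    obtain ⟨k, hk⟩ := hgen hbu.unit
    refine ⟨k % (p-1), Finset.mem_range.mpr (Nat.mod_lt _ (by omega)), ?_⟩
    have h1 : αu ^ (k % (p-1)) = hbu.unit := by rw [← hk, ← hord, pow_mod_orderOf]
    have h2 : (α : ZMod p) ^ (k % (p-1)) = ((b : ℕ) : ZMod p) := by
      rw [← hcoe, ← Units.val_pow_eq_pow_val, h1, hbu.unit_spec]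
    show ((α : ZMod p) ^ (k % (p-1))).val = b
    rw [h2, ZMod.val_cast_of_lt (by omega)]
  · intro t _; rfl
lemma sum_Icc_B2 {p : ℕ} (hp : 1 < p) :
    ∑ x ∈ Icc 1 (p-1), B2 ((x:ℂ)/p) = 1/(6*p) - 1/6 := by
  have hp0 : (p:ℂ) ≠ 0 := Nat.cast_ne_zero.mpr (by omega)
  have h1 : ∑ x ∈ range p, B2 ((x:ℂ)/p) = 1/(6*p) := by
    have h2 : ∀ x : ℕ, B2 ((x:ℂ)/p) = (x:ℂ)^2/(p:ℂ)^2 - (x:ℂ)/p + 1/6 := by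
      intro x; simp only [B2]; ring
    rw [Finset.sum_congr rfl (fun x _ => h2 x)]
    rw [Finset.sum_add_distrib, Finset.sum_sub_distrib, ← Finset.sum_div, ← Finset.sum_div,
      sum_sq_c, sum_id_c, Finset.sum_const, Finset.card_range]
    field_simp
    ring_nf
  have h3 : range p = insert 0 (Icc 1 (p-1)) := by
    ext x; simp only [Finset.mem_range, Finset.mem_insert, Finset.mem_Icc]; omega
  rw [h3, Finset.sum_insert (by simp)] at h1
  have h4 : B2 ((0:ℕ)/(p:ℂ)) = 1/6 := by simp [B2]
  rw [h4] at h1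
  linear_combination h1 

end Aux

open scoped Classical in
/-- `|det N| = (n/6)·∏_χ |(1/4)·B_{2,χ}|` where
`N_{ij} = a_{(i+j) mod n} − 1/12` and the product is over all even non-principal Dirichlet
characters mod `p`. -/
theorem statement8 (p n : ℕ) (hp : p.Prime) (hp5 : 5 ≤ p) (hn : n = (p - 1) / 2)
    (α : ℤ) (hα : orderOf (α : ZMod p) = p - 1)
    (N : Matrix (Fin n) (Fin n) ℝ)
    (hN : ∀ i j : Fin n, N i j =
      ((p : ℝ) / 2) * B2R (Int.fract ((α : ℝ) ^ (((i : ℕ) + (j : ℕ)) % n) / (p : ℝ))) - 1 / 12) :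
    |N.det| =
      ((n : ℝ) / 6) *
        ∏ χ ∈ Finset.univ.filter
            (fun χ : DirichletCharacter ℂ p => χ ≠ 1 ∧ χ (-1) = 1),
          ‖(1 / 4) * B2chi p χ‖ := by
  classical
  haveI : Fact p.Prime := ⟨hp⟩
  have hp1 : 1 < p := hp.one_lt
  have hodd : p % 2 = 1 := Nat.odd_iff.mp (hp.odd_of_ne_two (by omega))
  have h2n : p - 1 = 2 * n := by omega
  have hn2 : 2 ≤ n := by omega
  have hn0 : n ≠ 0 := by omega
  haveI : NeZero n := ⟨hn0⟩
  have hpC : (p:ℂ) ≠ 0 := Nat.cast_ne_zero.mpr (by omega)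
  have hnC : (n:ℂ) ≠ 0 := Nat.cast_ne_zero.mpr hn0
  obtain ⟨αu, hcoe, hord, hgen⟩ := units_gen hp hα
  set v : ℕ → ℕ := fun t => ((α : ZMod p) ^ t).val with hv
  have hαz0 : (α : ZMod p) ≠ 0 := hcoe ▸ Units.ne_zero αu
  have hzt : ∀ t, (α : ZMod p)^t ≠ 0 := fun t => pow_ne_zero t hαz0
  have hvlt : ∀ t, v t < p := fun t => ZMod.val_lt _
  have hv1 : ∀ t, 1 ≤ v t :=
    fun t => Nat.one_le_iff_ne_zero.mpr (fun h => hzt t ((ZMod.val_eq_zero _).mp h))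
  have hppos : (0:ℝ) < p := by exact_mod_cast Nat.pos_of_ne_zero (by omega)
  have hfract : ∀ t, Int.fract ((α:ℝ)^t / p) = (v t : ℝ)/p := by
    intro t
    have h1 : ((α^t : ℤ) : ZMod p) = (α : ZMod p) ^ t := by push_cast; ring
    have h2 : (v t : ℤ) = (α^t : ℤ) % p := by
      show ((((α : ZMod p) ^ t).val : ℕ) : ℤ) = (α^t : ℤ) % p
      rw [← h1]
      exact_mod_cast ZMod.val_intCast (α^t)
    have h4 := Int.mul_ediv_add_emod (α^t) (p : ℤ)
    have h5 : (α:ℝ)^t / p = ((α^t / p : ℤ) : ℝ) + (v t : ℝ)/p := by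
      have h6 := congrArg (Int.cast : ℤ → ℝ) h4
      push_cast at h6
      have h7 : ((v t : ℕ) : ℝ) = (((α^t : ℤ) % p : ℤ) : ℝ) := by exact_mod_cast congrArg (Int.cast : ℤ → ℝ) h2
      rw [h7]
      field_simp
      linarith [h6]
    rw [h5, Int.fract_intCast_add, Int.fract_eq_self.mpr ⟨by positivity, by
      rw [div_lt_one hppos]; exact_mod_cast hvlt t⟩]
  set a : ℕ → ℝ := fun t => ((p:ℝ)/2) * B2R ((v t : ℝ)/p) with hadef
  have hNa : ∀ i j : Fin n, N i j = a (((i:ℕ)+(j:ℕ)) % n) - 1/12 := by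
    intro i j; rw [hN, hfract]
  have hαn : (α : ZMod p)^n = -1 := by
    have h1 : ((α : ZMod p)^n)^2 = 1 := by
      rw [← pow_mul]
      have h2 : n * 2 = p - 1 := by omega
      rw [h2, ← hα, pow_orderOf_eq_one]
    have h2 : (α : ZMod p)^n ≠ 1 := by
      intro h
      have h3 := orderOf_dvd_of_pow_eq_one h
      rw [hα] at h3
      have := Nat.le_of_dvd (by omega) h3
      omega
    have h3 : ((α : ZMod p)^n - 1) * ((α : ZMod p)^n + 1) = 0 := by linear_combination h1
    rcases mul_eq_zero.mp h3 with h | h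
    · exact absurd (sub_eq_zero.mp h) h2
    · linear_combination h
  have hvshift : ∀ t, v (n + t) = p - v t := by
    intro t
    have h1 : (α : ZMod p)^(n+t) = -((α : ZMod p)^t) := by rw [pow_add, hαn]; ring
    show ((α : ZMod p)^(n+t)).val = p - ((α : ZMod p)^t).val
    rw [h1, ZMod.neg_val, if_neg (hzt t)]
  set bb : ℕ → ℂ := fun x => B2 ((x:ℂ)/p) with hbb
  have hbbshift : ∀ t, bb (v (n + t)) = bb (v t) := by
    intro t
    rw [hvshift]
    show B2 (((p - v t : ℕ):ℂ)/p) = B2 (((v t : ℕ):ℂ)/p)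
    have h1 : ((p - v t : ℕ) : ℂ) = (p : ℂ) - (v t : ℕ) := by
      push_cast [Nat.cast_sub (le_of_lt (hvlt t))]
      ring
    rw [h1]
    simp only [B2]
    field_simp
    ring
  have hsplit : ∀ g : ℕ → ℂ, (∀ t, g (n + t) = g t) →
      ∑ t ∈ Finset.range (p-1), g t * bb (v t) = 2 * ∑ t ∈ Finset.range n, g t * bb (v t) := by
    intro g hg
    have h1 : p - 1 = n + n := by omega
    rw [h1, Finset.sum_range_add]
    have h2 : ∀ t ∈ Finset.range n, g (n+t) * bb (v (n+t)) = g t * bb (v t) := by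
      intro t _
      rw [hg, hbbshift]
    rw [Finset.sum_congr rfl h2]
    ring
  set ω : ℂ := Complex.exp (2*Real.pi*I/n) with hωdef
  have hω : IsPrimitiveRoot ω n := Complex.isPrimitiveRoot_exp n hn0
  have hω1 : ω ^ n = 1 := hω.pow_eq_one
  have hω0 : ω ≠ 0 := by
    intro h
    rw [h, zero_pow hn0] at hω1
    exact zero_ne_one hω1
  have hωmod : ∀ k s : ℕ, ω ^ ((k % n) * s) = ω ^ (k * s) := by
    intro k s
    have h3 : k * s = n * (k / n * s) + (k % n) * s := by
      conv_lhs => rw [← Nat.div_add_mod k n]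
      ring
    conv_rhs => rw [h3, pow_add, pow_mul, hω1, one_pow, one_mul]
  set y : ℕ → ℂ := fun s => ∑ t ∈ Finset.range n, ω^(s*t) * ((a t : ℝ) : ℂ) with hy
  set lam : Fin n → ℂ := fun s =>
    ∑ t ∈ Finset.range n, ω^(t * s.val) * (((a t : ℝ) : ℂ) - 1/12) with hlam
  have haC : ∀ t, ((a t : ℝ) : ℂ) = ((p:ℂ)/2) * bb (v t) := by
    intro t
    show ((((p:ℝ)/2 * B2R ((v t : ℝ)/p)) : ℝ) : ℂ) = ((p:ℂ)/2) * B2 (((v t : ℕ):ℂ)/p)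
    simp only [B2R, B2]
    push_cast
    ring
  have habs1 : ‖ω‖ = 1 := by
    have h := congrArg (‖·‖) hω1
    rw [norm_pow, norm_one] at h
    rcases lt_trichotomy (‖ω‖) 1 with h1 | h1 | h1
    · have h2 := pow_lt_one₀ (norm_nonneg ω) h1 hn0
      rw [h] at h2
      exact absurd h2 (lt_irrefl _)
    · exact h1
    · have h2 := one_lt_pow₀ h1 hn0
      rw [h] at h2
      exact absurd h2 (lt_irrefl _)
  have hconj : ∀ k : ℕ, (starRingEnd ℂ) (ω^k) = (ω^k)⁻¹ := by
    intro k
    exact (Complex.inv_eq_conj (by rw [norm_pow, habs1, one_pow])).symm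
  set W : Matrix (Fin n) (Fin n) ℂ := Matrix.of (fun i j : Fin n => ω ^ (i.val * j.val)) with hW
  have hdet : ‖((N.det : ℝ) : ℂ)‖ = ∏ s : Fin n, ‖lam s‖ := by
    have hMW : N.map (Complex.ofReal) * W = (W.map (starRingEnd ℂ)) * Matrix.diagonal lam := by
      ext i s
      rw [Matrix.mul_apply, Matrix.mul_diagonal]
      have hne : ω ^ (i.val * s.val) ≠ 0 := pow_ne_zero _ hω0
      apply mul_left_cancel₀ hne
      have hlhs : ω ^ (i.val * s.val) * ∑ j, (N.map Complex.ofReal) i j * W j s = lam s := by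
        rw [Finset.mul_sum]
        have hterm : ∀ j : Fin n, ω ^ (i.val * s.val) * ((N.map Complex.ofReal) i j * W j s)
            = ω ^ ((i + j : Fin n).val * s.val) * (((a ((i + j : Fin n).val) : ℝ) : ℂ) - 1/12) := by
          intro j
          have h1 : (N.map Complex.ofReal) i j = (((a ((i.val + j.val) % n) : ℝ) : ℂ) - 1/12) := by
            rw [Matrix.map_apply, hNa i j]
            push_cast
            ring
          have h2 : (i + j : Fin n).val = (i.val + j.val) % n := Fin.val_add i j
          have h3 : W j s = ω ^ (j.val * s.val) := rfl
          have h5 : ω ^ (((i.val + j.val) % n) * s.val)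
              = ω ^ (i.val*s.val) * ω ^ (j.val*s.val) := by
            rw [hωmod, ← pow_add, ← add_mul]
          rw [h1, h2, h3, h5]
          ring
        rw [Finset.sum_congr rfl (fun j _ => hterm j)]
        have hre : ∑ j : Fin n, ω ^ ((i + j : Fin n).val * s.val)
              * (((a ((i + j : Fin n).val) : ℝ) : ℂ) - 1/12)
            = ∑ k : Fin n, ω ^ (k.val * s.val) * (((a k.val : ℝ) : ℂ) - 1/12) :=
          Fintype.sum_equiv (Equiv.addLeft i)
            (fun j => ω ^ ((i + j : Fin n).val * s.val)
              * (((a ((i + j : Fin n).val) : ℝ) : ℂ) - 1/12))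
            (fun k => ω ^ (k.val * s.val) * (((a k.val : ℝ) : ℂ) - 1/12))
            (fun j => rfl)
        rw [hre]
        show _ = ∑ t ∈ Finset.range n, ω^(t * s.val) * (((a t : ℝ):ℂ) - 1/12)
        exact Fin.sum_univ_eq_sum_range (fun t => ω ^ (t * s.val) * (((a t : ℝ) : ℂ) - 1/12)) n
      rw [hlhs]
      have h4 : W.map (starRingEnd ℂ) i s = (ω ^ (i.val * s.val))⁻¹ := by
        rw [Matrix.map_apply]
        exact hconj _
      rw [h4, ← mul_assoc, mul_inv_cancel₀ hne, one_mul]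
    have hWdet : W.det ≠ 0 := by
      have hWv : W = (Matrix.vandermonde (fun i : Fin n => ω ^ (i:ℕ))) := by
        ext i j
        rw [hW, Matrix.of_apply, Matrix.vandermonde_apply, ← pow_mul]
      rw [hWv]
      intro h
      rw [Matrix.det_vandermonde_eq_zero_iff] at h
      obtain ⟨i, j, heq, hne⟩ := h
      exact hne (Fin.ext (hω.pow_inj i.isLt j.isLt heq))
    have hconjdet : (W.map (starRingEnd ℂ)).det = (starRingEnd ℂ) W.det := by
      have h1 : W.map (starRingEnd ℂ) = (W.transpose).conjTranspose := by
        ext i j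
        rw [Matrix.map_apply, Matrix.conjTranspose_apply, Matrix.transpose_apply]
        rfl
      rw [h1, Matrix.det_conjTranspose, Matrix.det_transpose]
      rfl
    have hdet2 : (N.map Complex.ofReal).det * W.det = (starRingEnd ℂ) W.det * ∏ s, lam s := by
      rw [← Matrix.det_mul, hMW, Matrix.det_mul, Matrix.det_diagonal, hconjdet]
    have h5 : (N.map Complex.ofReal).det = ((N.det : ℝ) : ℂ) :=
      (RingHom.map_det Complex.ofRealHom N).symm
    have h3 : ‖((N.det : ℝ) : ℂ)‖ * ‖W.det‖
        = ‖W.det‖ * ∏ s, ‖lam s‖ := by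
      have h6 := congrArg (‖·‖) hdet2
      rwa [norm_mul, norm_mul, Complex.norm_conj, norm_prod, h5] at h6
    have h4 : ‖W.det‖ ≠ 0 := fun h => hWdet (norm_eq_zero.mp h)
    apply mul_right_cancel₀ h4
    rw [h3, mul_comm]
  have hT : (2:ℂ) * ∑ t ∈ Finset.range n, bb (v t) = 1/(6*(p:ℂ)) - 1/6 := by
    have h1 := hsplit (fun _ => 1) (fun t => rfl)
    simp only [one_mul] at h1
    rw [← h1, ← sum_reindex_pow hp hα bb]
    exact sum_Icc_B2 hp1
  have hlam0 : ‖lam 0‖ = n/6 := by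
    have hpn : p = 2*n + 1 := by omega
    have hp2 : (p:ℂ) = 2*(n:ℂ)+1 := by exact_mod_cast congrArg (Nat.cast : ℕ → ℂ) hpn
    have h2 : ∑ t ∈ Finset.range n, ((a t : ℝ):ℂ) = -((n:ℂ)/12) := by
      have h3 : ∑ t ∈ Finset.range n, ((a t : ℝ):ℂ)
          = ((p:ℂ)/2) * ∑ t ∈ Finset.range n, bb (v t) := by
        rw [Finset.mul_sum]
        exact Finset.sum_congr rfl (fun t _ => haC t)
      have h4 : (2:ℂ) ≠ 0 := two_ne_zero
      have h5 : ∑ t ∈ Finset.range n, bb (v t) = (1/(6*(p:ℂ)) - 1/6)/2 := by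
        rw [eq_div_iff h4]
        linear_combination hT
      rw [h3, h5]
      have h6 : 2*(n:ℂ)+1 ≠ 0 := by rw [← hp2]; exact hpC
      rw [hp2]
      have h7 : (144:ℂ) + (n:ℂ)*288 ≠ 0 := by
        have h8 : (144:ℂ) + (n:ℂ)*288 = 144*(2*(n:ℂ)+1) := by ring
        rw [h8]
        exact mul_ne_zero (by norm_num) h6
      field_simp [h6, h7]
      ring
    have h1 : lam 0 = -((n:ℂ)/6) := by
      show ∑ t ∈ Finset.range n, ω^(t * (0:Fin n).val) * (((a t : ℝ):ℂ) - 1/12) = -((n:ℂ)/6)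
      have h7 : ∀ t ∈ Finset.range n, ω^(t * (0:Fin n).val) * (((a t : ℝ):ℂ) - 1/12)
          = ((a t : ℝ):ℂ) - 1/12 := by
        intro t _
        norm_num [Fin.val_zero]
      rw [Finset.sum_congr rfl h7, Finset.sum_sub_distrib, h2, Finset.sum_const,
        Finset.card_range]
      ring
    have h8 : -((n:ℂ)/6) = ((-(n/6) : ℝ) : ℂ) := by push_cast; ring
    rw [h1, h8, Complex.norm_real, Real.norm_eq_abs, abs_neg]
    exact abs_of_nonneg (by positivity)
  have hlams : ∀ s : Fin n, s ≠ 0 → lam s = y s.val := by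
    intro s hs
    have hgeom : ∑ t ∈ Finset.range n, ω^(t * s.val) = 0 := by
      have hx1 : ω ^ s.val ≠ 1 := by
        intro h
        have hdvd := (hω.pow_eq_one_iff_dvd s.val).mp h
        have h2 := Nat.le_of_dvd (Nat.pos_of_ne_zero (fun h0 => hs (Fin.ext h0))) hdvd
        have := s.isLt
        omega
      have hxn : (ω ^ s.val) ^ n = 1 := by
        rw [← pow_mul, mul_comm, pow_mul, hω1, one_pow]
      calc ∑ t ∈ Finset.range n, ω^(t*s.val) = ∑ t ∈ Finset.range n, (ω^s.val)^t := by
            refine Finset.sum_congr rfl fun t _ => ?_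
            rw [← pow_mul, mul_comm]
        _ = ((ω^s.val)^n - 1)/(ω^s.val - 1) := geom_sum_eq hx1 n
        _ = 0 := by rw [hxn, sub_self, zero_div]
    show ∑ t ∈ Finset.range n, ω^(t * s.val) * (((a t : ℝ):ℂ) - 1/12)
        = ∑ t ∈ Finset.range n, ω^(s.val * t) * ((a t : ℝ):ℂ)
    have h1 : ∀ t ∈ Finset.range n, ω^(t*s.val) * (((a t:ℝ):ℂ) - 1/12)
        = ω^(s.val*t) * ((a t:ℝ):ℂ) - (1/12) * ω^(t*s.val) := by
      intro t _
      rw [mul_comm t s.val]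
      ring
    rw [Finset.sum_congr rfl h1, Finset.sum_sub_distrib, ← Finset.mul_sum, hgeom, mul_zero,
      sub_zero]
  have hωu : IsUnit ω := hω.isUnit (by omega)
  have hωcoe : (hωu.unit : ℂ) = ω := hωu.unit_spec
  have hζpow : ∀ s : Fin n, (hωu.unit ^ s.val) ^ (p-1) = 1 := by
    intro s
    apply Units.ext
    rw [Units.val_pow_eq_pow_val, Units.val_pow_eq_pow_val, hωcoe, Units.val_one, ← pow_mul, h2n]
    have h1 : s.val * (2*n) = n * (2*s.val) := by ring
    rw [h1, pow_mul, hω1, one_pow]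
  set chi : Fin n → DirichletCharacter ℂ p :=
    fun s => MulChar.ofUnitHom (genChar αu (p-1) hord hgen (hωu.unit ^ s.val) (hζpow s)) with hchi
  have hchipow : ∀ s : Fin n, ∀ t : ℕ, chi s ((α : ZMod p) ^ t) = ω ^ (s.val * t) := by
    intro s t
    have h1 : (α:ZMod p)^t = ((αu^t : (ZMod p)ˣ) : ZMod p) := by
      rw [Units.val_pow_eq_pow_val, hcoe]
    rw [hchi]
    simp only []
    rw [h1, MulChar.ofUnitHom_coe,
      genChar_apply αu (p-1) hord hgen _ (hζpow s) t (αu^t) rfl, ← pow_mul,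
      Units.val_pow_eq_pow_val, hωcoe]
  have hchiB : ∀ s : Fin n, B2chi p (chi s) = 4 * y s.val := by
    intro s
    have hf : ∑ x ∈ Finset.Icc 1 (p-1), (chi s) ((x:ℕ) : ZMod p) * B2 ((x:ℂ)/p)
        = ∑ t ∈ Finset.range (p-1), ω^(s.val * t) * bb (v t) := by
      rw [sum_reindex_pow hp hα (fun x => (chi s) ((x:ℕ):ZMod p) * B2 (((x:ℕ):ℂ)/p))]
      refine Finset.sum_congr rfl fun t _ => ?_
      have h1 : ((v t : ℕ) : ZMod p) = (α:ZMod p)^t := by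
        show ((((α:ZMod p)^t).val : ℕ) : ZMod p) = (α:ZMod p)^t
        rw [ZMod.natCast_val, ZMod.cast_id]
      rw [h1, hchipow]
    have hg : ∑ t ∈ Finset.range (p-1), ω^(s.val*t) * bb (v t)
        = 2 * ∑ t ∈ Finset.range n, ω^(s.val*t) * bb (v t) := by
      refine hsplit (fun t => ω^(s.val*t)) ?_
      intro t
      have h2 : s.val * (n + t) = n * s.val + s.val * t := by ring
      show ω ^ (s.val * (n + t)) = ω ^ (s.val * t)
      rw [h2, pow_add, pow_mul, hω1, one_pow, one_mul]
    have hy2 : y s.val = ((p:ℂ)/2) * ∑ t ∈ Finset.range n, ω^(s.val*t) * bb (v t) := by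
      show ∑ t ∈ Finset.range n, ω^(s.val*t) * ((a t : ℝ):ℂ) = _
      rw [Finset.mul_sum]
      refine Finset.sum_congr rfl fun t _ => ?_
      rw [haC t]
      ring
    have hB : B2chi p (chi s)
        = (p:ℂ) * ∑ x ∈ Finset.Icc 1 (p-1), (chi s) ((x:ℕ):ZMod p) * B2 (((x:ℕ):ℂ)/p) := rfl
    rw [hB, hf, hg, hy2]
    ring
  have hprod : ∏ χ ∈ Finset.univ.filter (fun χ : DirichletCharacter ℂ p => χ ≠ 1 ∧ χ (-1) = 1),
      ‖(1/4) * B2chi p χ‖ = ∏ s ∈ Finset.univ.filter (fun s : Fin n => s ≠ 0),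
      ‖lam s‖ := by
    have hext : ∀ (ψ ψ' : DirichletCharacter ℂ p),
        ψ (α:ZMod p) = ψ' (α:ZMod p) → ψ = ψ' := by
      intro ψ ψ' hψ
      apply MulChar.ext'
      intro x
      by_cases hx : IsUnit x
      · obtain ⟨k, hk⟩ := hgen hx.unit
        have hxk : x = (α:ZMod p)^k := by
          rw [← hx.unit_spec, ← hk, Units.val_pow_eq_pow_val, hcoe]
        rw [hxk, _root_.map_pow, _root_.map_pow, hψ]
      · rw [MulChar.map_nonunit ψ hx, MulChar.map_nonunit ψ' hx]
    have hchival : ∀ s : Fin n, chi s (α : ZMod p) = ω ^ s.val := by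
      intro s
      have := hchipow s 1
      rwa [pow_one, mul_one] at this
    refine (Finset.prod_bij
      (fun (s : Fin n) (_ : s ∈ Finset.univ.filter (fun s : Fin n => s ≠ 0)) => chi s)
      ?_ ?_ ?_ ?_).symm
    · intro s hs
      rw [Finset.mem_filter] at hs ⊢
      refine ⟨Finset.mem_univ _, ?_, ?_⟩
      · intro h
        have h' : chi s = 1 := h
        have h1 : chi s (α : ZMod p) = 1 := by
          rw [h']
          exact MulChar.one_apply (hcoe ▸ (αu.isUnit))
        rw [hchival] at h1
        have hdvd := (hω.pow_eq_one_iff_dvd s.val).mp h1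
        have h2 : s.val = 0 := Nat.eq_zero_of_dvd_of_lt hdvd s.isLt
        exact hs.2 (Fin.ext h2)
      · have h1 : ((-1 : ZMod p)) = (α:ZMod p)^n := hαn.symm
        rw [h1, hchipow]
        have h2 : s.val * n = n * s.val := mul_comm _ _
        rw [h2, pow_mul, hω1, one_pow]
    · intro s hs s' hs' h
      have h' : chi s = chi s' := h
      have h1 : chi s (α : ZMod p) = chi s' (α : ZMod p) := by rw [h']
      rw [hchival, hchival] at h1
      exact Fin.ext (hω.pow_inj s.isLt s'.isLt h1)
    · intro χ hχ
      rw [Finset.mem_filter] at hχ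
      obtain ⟨-, hχ1, hχev⟩ := hχ
      have hxn : (χ ((α:ZMod p)))^n = 1 := by
        rw [← _root_.map_pow, hαn]
        exact hχev
      obtain ⟨i, hi, hieq⟩ := hω.eq_pow_of_pow_eq_one hxn
      refine ⟨⟨i, hi⟩, Finset.mem_filter.mpr ⟨Finset.mem_univ _, ?_⟩, ?_⟩
      · intro h0
        have h1 : i = 0 := congrArg Fin.val h0
        apply hχ1
        apply hext
        rw [← hieq, h1, pow_zero, MulChar.one_apply (hcoe ▸ (αu.isUnit))]
      · apply hext
        rw [hchival, ← hieq]
    · intro s hs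
      rw [Finset.mem_filter] at hs
      rw [hchiB s, hlams s hs.2]
      congr 1
      ring
  have hfinal : |N.det| = ‖((N.det : ℝ) : ℂ)‖ := ((Complex.norm_real _).trans (Real.norm_eq_abs _)).symm
  rw [hfinal, hdet, ← Finset.mul_prod_erase Finset.univ _ (Finset.mem_univ (0 : Fin n)),
    hlam0]
  congr 1
  rw [← Finset.filter_ne']
  exact hprod.symm.trans
    (Finset.prod_congr (by ext χ; simp [Finset.mem_filter]) (fun _ _ => rfl))

end SiegelPaper
end
end

section
/- For every 0 ≤ j ≤ n−1 the complex number b_j is rational, i.e. there exists q ∈ ℚ with b_j = q. -/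
noncomputable section

open Complex Filter Matrix

namespace SiegelPaper

/-- Rational version of `a_t`. -/
def aQ (p : ℕ) (α : ℤ) (t : ℕ) : ℚ :=
  ((p : ℚ) / 2) *
    ((Int.fract ((α : ℚ) ^ t / (p : ℚ))) ^ 2 - Int.fract ((α : ℚ) ^ t / (p : ℚ)) + 1 / 6)

lemma aC_eq_aQ (p : ℕ) (α : ℤ) (t : ℕ) : aC p α t = ((aQ p α t : ℚ) : ℂ) := by
  have h1 : (α : ℝ) ^ t / (p : ℝ) = ((((α : ℚ) ^ t / (p : ℚ)) : ℚ) : ℝ) := by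
    push_cast
    ring
  have hfr : Int.fract ((α : ℝ) ^ t / (p : ℝ)) =
      ((Int.fract ((α : ℚ) ^ t / (p : ℚ)) : ℚ) : ℝ) := by
    rw [h1]
    simpa using Int.map_fract (Rat.castHom ℝ) Rat.cast_strictMono ((α : ℚ) ^ t / (p : ℚ))
  have hR : (p : ℝ) / 2 * ((Int.fract ((α : ℝ) ^ t / (p : ℝ))) ^ 2 -
      Int.fract ((α : ℝ) ^ t / (p : ℝ)) + 1 / 6) = ((aQ p α t : ℚ) : ℝ) := by
    rw [hfr, aQ]
    push_cast
    ring
  calc aC p α t = (((p : ℝ) / 2 * ((Int.fract ((α : ℝ) ^ t / (p : ℝ))) ^ 2 -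
          Int.fract ((α : ℝ) ^ t / (p : ℝ)) + 1 / 6) : ℝ) : ℂ) := by
        rw [aC, B2]
        push_cast
        ring
    _ = ((aQ p α t : ℚ) : ℂ) := by
        rw [hR]
        norm_cast

/-- each `b_j` is a rational number. -/
theorem statement16 (p n : ℕ) (hp : p.Prime) (hp5 : 5 ≤ p) (hn : n = (p - 1) / 2)
    (α : ℤ) (hα : orderOf (α : ZMod p) = p - 1)
    (ω : ℂ) (hω : IsPrimitiveRoot ω n) (j : ℕ) (hj : j < n) :
    ∃ q : ℚ, bC p n α ω j = (q : ℂ) := by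
  classical
  have npos : 0 < n := by omega
  have hn1 : 1 < n := by omega
  haveI : NeZero n := ⟨npos.ne'⟩
  set N : ℕ+ := ⟨n, npos⟩ with hNdef
  set K := CyclotomicField N ℚ with hKdef
  haveI : IsCyclotomicExtension {(N : ℕ)} ℚ K := by
    show IsCyclotomicExtension {(N : ℕ)} ℚ (CyclotomicField (N : ℕ) ℚ)
    haveI : NeZero ((N : ℕ) : ℚ) := ⟨by exact_mod_cast N.ne_zero⟩
    exact CyclotomicField.isCyclotomicExtension (n := (N : ℕ)) (K := ℚ)
  haveI : FiniteDimensional ℚ K := IsCyclotomicExtension.finiteDimensional {(N : ℕ)} ℚ K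
  haveI : IsGalois ℚ K := IsCyclotomicExtension.isGalois {(N : ℕ)} ℚ K
  have hζN : IsPrimitiveRoot (IsCyclotomicExtension.zeta (N : ℕ) ℚ K) ((N : ℕ+) : ℕ) :=
    IsCyclotomicExtension.zeta_spec (N : ℕ) ℚ K
  set ζ : K := IsCyclotomicExtension.zeta (N : ℕ) ℚ K with hζdef
  have hζ : IsPrimitiveRoot ζ n := hζN
  -- the embedding of `K` into `ℂ` sending `ζ` to `ω`
  have hroot : (Polynomial.aeval ω) (minpoly ℚ ((hζN.powerBasis ℚ).gen)) = 0 := by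
    rw [IsPrimitiveRoot.powerBasis_gen, ← Polynomial.cyclotomic_eq_minpoly_rat hζ npos,
      Polynomial.aeval_def, ← Polynomial.eval_map, Polynomial.map_cyclotomic]
    exact hω.isRoot_cyclotomic npos
  set φ : K →ₐ[ℚ] ℂ := (hζN.powerBasis ℚ).lift ω hroot with hφdef
  have hφζ : φ ζ = ω := by
    have := (hζN.powerBasis ℚ).lift_gen ω hroot
    rwa [IsPrimitiveRoot.powerBasis_gen] at this
  -- the element `b_j` inside `K`
  set g : ℕ → K := fun m =>
    (ζ ^ (j * m))⁻¹ * (∑ t ∈ Finset.range n, ζ ^ (m * t) * ((aQ p α t : ℚ) : K))⁻¹ with hgdef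
  set bK : K := (n : K)⁻¹ * ∑ s ∈ Finset.range n, g s with hbKdef
  -- `φ` sends `bK` to `b_j`
  have hA : φ bK = bC p n α ω j := by
    rw [hbKdef, bC, _root_.map_mul, map_inv₀, map_natCast, _root_.map_sum, one_div]
    congr 1
    refine Finset.sum_congr rfl fun s _ => ?_
    rw [hgdef]
    simp only [_root_.map_mul, map_inv₀, map_pow, _root_.map_sum, map_ratCast, hφζ]
    congr 1
    · rw [_root_.zpow_neg, ← Nat.cast_mul, zpow_natCast]
    · rw [yC]
      congr 1
      refine Finset.sum_congr rfl fun t _ => ?_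
      rw [aC_eq_aQ]
  -- powers of `ζ` only depend on the exponent modulo `n`
  have hpow0 : ∀ a : ℕ, ζ ^ a = ζ ^ (a % n) := by
    intro a
    conv_lhs => rw [← Nat.mod_add_div a n]
    rw [pow_add, pow_mul, hζ.pow_eq_one, one_pow, mul_one]
  have hpow : ∀ a b : ℕ, a ≡ b [MOD n] → ζ ^ a = ζ ^ b := by
    intro a b hab
    have h : a % n = b % n := hab
    rw [hpow0 a, hpow0 b, h]
  have hgmod : ∀ m : ℕ, g m = g (m % n) := by
    intro m
    rw [hgdef]
    simp only
    congr 1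
    · congr 1
      exact hpow _ _ (Nat.ModEq.mul_left j (Nat.mod_modEq m n)).symm
    · congr 1
      refine Finset.sum_congr rfl fun t _ => ?_
      congr 1
      exact hpow _ _ (Nat.ModEq.mul_right t (Nat.mod_modEq m n)).symm
  -- `bK` is fixed by the Galois group
  have key : ∀ σ : K ≃ₐ[ℚ] K, σ bK = bK := by
    intro σ
    have hσζ : IsPrimitiveRoot (σ ζ) n := hζ.map_of_injective σ.injective
    obtain ⟨k, hklt, hkcop, hk⟩ := hζ.isPrimitiveRoot_iff.mp hσζ
    have hσg : ∀ s : ℕ, σ (g s) = g (k * s) := by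
      intro s
      rw [hgdef]
      simp only [_root_.map_mul, map_inv₀, map_pow, _root_.map_sum, map_ratCast, ← hk,
        ← pow_mul]
      congr 1
      · congr 1
        congr 1
        ring
      · congr 1
        refine Finset.sum_congr rfl fun t _ => ?_
        congr 2
        ring
    have hsum : ∑ s ∈ Finset.range n, g (k * s % n) = ∑ s ∈ Finset.range n, g s := by
      refine Finset.sum_bij (fun s _ => k * s % n) ?_ ?_ ?_ ?_
      · intro a _
        exact Finset.mem_range.mpr (Nat.mod_lt _ npos)
      · intro a ha b hb hab
        have h1 : k * a ≡ k * b [MOD n] := hab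
        have h2 : a ≡ b [MOD n] :=
          Nat.ModEq.cancel_left_of_coprime (Nat.Coprime.symm hkcop) h1
        have ha' := Finset.mem_range.mp ha
        have hb' := Finset.mem_range.mp hb
        have h3 : a % n = b % n := h2
        rwa [Nat.mod_eq_of_lt ha', Nat.mod_eq_of_lt hb'] at h3
      · intro b hb
        obtain ⟨k', -, hkk'⟩ := Nat.exists_mul_mod_eq_one_of_coprime hkcop hn1
        refine ⟨k' * b % n, Finset.mem_range.mpr (Nat.mod_lt _ npos), ?_⟩
        have h4 : k * (k' * b % n) ≡ b [MOD n] := by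
          calc k * (k' * b % n) ≡ k * (k' * b) [MOD n] :=
                Nat.ModEq.mul_left k (Nat.mod_modEq (k' * b) n)
            _ = k * k' * b := by ring
            _ ≡ 1 * b [MOD n] := by
                refine Nat.ModEq.mul_right b ?_
                show k * k' % n = 1 % n
                rw [hkk', Nat.mod_eq_of_lt hn1]
            _ = b := one_mul b
        have h5 : k * (k' * b % n) % n = b % n := h4
        rwa [Nat.mod_eq_of_lt (Finset.mem_range.mp hb)] at h5
      · intro a _
        rfl
    rw [hbKdef, _root_.map_mul, map_inv₀, map_natCast, _root_.map_sum]
    congr 1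
    calc ∑ s ∈ Finset.range n, σ (g s) = ∑ s ∈ Finset.range n, g (k * s % n) :=
          Finset.sum_congr rfl fun s _ => (hσg s).trans (hgmod (k * s))
      _ = ∑ s ∈ Finset.range n, g s := hsum
  -- conclude: `bK` lies in `ℚ`
  have hfix : bK ∈ IntermediateField.fixedField (⊤ : Subgroup (K ≃ₐ[ℚ] K)) := by
    intro σ
    exact key σ
  have heq : IntermediateField.fixedField (⊤ : Subgroup (K ≃ₐ[ℚ] K)) = ⊥ :=
    ((IsGalois.tfae (F := ℚ) (E := K)).out 0 1).mp (inferInstance : IsGalois ℚ K)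
  rw [heq, IntermediateField.mem_bot] at hfix
  obtain ⟨q, hq⟩ := hfix
  refine ⟨q, ?_⟩
  rw [← hA, ← hq, AlgHom.commutes]
  exact eq_ratCast (algebraMap ℚ ℂ) q

end SiegelPaper
end
end

section
/- Define c_0 = b_0 − b_1, c_1 = b_{n−1} − b_0, and c_i = b_{n−i} − b_{n+1−i} for 2 ≤ i ≤ n−1; each c_i is rational. Let L be the least positive integer such that L·c_i ∈ ℤ for all i, and set T = ∑_{i=0}^{n−1} (L·c_i)·α^{2i} ∈ ℤ. Then N := (p / gcd(p,T))·L is the least positive integer for which there exist integers e_0,…,e_{n−1} satisfying: p divides ∑_{i=0}^{n−1} e_i·α^{2i}, and for every 0 ≤ i ≤ n−1, ∑_{j=0}^{n−1} e_j·a_{(i+j) mod n} = N if i = 0, −N if i = n−1, and 0 otherwise. (This N is the order of the class of P_0 − P_{n−1} in the rational cuspidal group of X₁(p).) -/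
noncomputable section

open Complex Filter Matrix

namespace SiegelPaper

section Aux

section DFT

variable {n : ℕ} [NeZero n]

def ee (ω : ℂ) {n : ℕ} (x : ZMod n) : ℂ := ω ^ x.val

variable {ω : ℂ} (hω : IsPrimitiveRoot ω n)
include hω

omit [NeZero n] in
lemma pow_mod_eq (k : ℕ) : ω ^ (k % n) = ω ^ k := by
  conv_rhs => rw [← Nat.mod_add_div k n, pow_add, pow_mul, hω.pow_eq_one, one_pow, mul_one]

lemma ee_natCast (k : ℕ) : ee ω (k : ZMod n) = ω ^ k := by
  rw [ee, ZMod.val_natCast, pow_mod_eq hω]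

omit hω in
lemma natCast_val (x : ZMod n) : ((x.val : ℕ) : ZMod n) = x := by
  simp [ZMod.natCast_val, ZMod.cast_id]

lemma ee_add (x y : ZMod n) : ee ω (x + y) = ee ω x * ee ω y := by
  rw [← natCast_val x, ← natCast_val y, ← Nat.cast_add, ee_natCast hω, ee_natCast hω,
    ee_natCast hω, pow_add]

omit hω in
lemma ee_zero : ee ω (0 : ZMod n) = 1 := by simp [ee, ZMod.val_zero]

lemma ee_neg_mul (x : ZMod n) : ee ω (-x) * ee ω x = 1 := by
  rw [← ee_add hω, neg_add_cancel, ee_zero]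

lemma ee_ne_zero (x : ZMod n) : ee ω x ≠ 0 := by
  intro h
  have h2 := ee_neg_mul hω x
  rw [h, mul_zero] at h2
  simp at h2

lemma ee_neg (x : ZMod n) : ee ω (-x) = (ee ω x)⁻¹ :=
  eq_inv_of_mul_eq_one_left (ee_neg_mul hω x)

omit hω in
lemma sum_zmod (f : ℕ → ℂ) : ∑ x : ZMod n, f x.val = ∑ i ∈ Finset.range n, f i := by
  refine Finset.sum_nbij' (fun x => x.val) (fun i => (i : ZMod n)) ?_ ?_ ?_ ?_ ?_
  · intro x _; exact Finset.mem_range.2 x.val_lt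
  · intro i _; exact Finset.mem_univ _
  · intro x _; exact natCast_val x
  · intro i hi; exact ZMod.val_cast_of_lt (Finset.mem_range.1 hi)
  · intro x _; rfl

lemma sum_ee (x : ZMod n) : ∑ s : ZMod n, ee ω (x * s) = if x = 0 then (n : ℂ) else 0 := by
  split_ifs with h
  · subst h
    simp only [zero_mul, ee_zero, Finset.sum_const, Finset.card_univ, ZMod.card, nsmul_eq_mul,
      mul_one]
  · have hvpos : 0 < x.val := Nat.pos_of_ne_zero (fun h' => h (by rwa [ZMod.val_eq_zero] at h'))
    have hz1 : ee ω x ≠ 1 := hω.pow_ne_one_of_pos_of_lt hvpos.ne' x.val_lt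
    have key : ∀ s : ZMod n, ee ω (x * s) = (ee ω x) ^ s.val := by
      intro s
      rw [ee, ee, ← pow_mul, ZMod.val_mul, pow_mod_eq hω]
    rw [Finset.sum_congr rfl fun s _ => key s]
    rw [sum_zmod (fun i => (ee ω x) ^ i), geom_sum_eq hz1]
    have hh : (ee ω x) ^ n = 1 := by
      rw [ee, ← pow_mul, mul_comm, pow_mul, hω.pow_eq_one, one_pow]
    rw [hh, sub_self, zero_div]

def yZf (ω : ℂ) {n : ℕ} [NeZero n] (a : ZMod n → ℂ) (s : ZMod n) : ℂ := ∑ t : ZMod n, ee ω (s * t) * a t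

def bZf (ω : ℂ) {n : ℕ} [NeZero n] (a : ZMod n → ℂ) (j : ZMod n) : ℂ :=
  (n : ℂ)⁻¹ * ∑ s : ZMod n, ee ω (-(j * s)) * (yZf ω a s)⁻¹

lemma conv {a : ZMod n → ℂ} (hy : ∀ s, yZf ω a s ≠ 0) (i : ZMod n) :
    ∑ j : ZMod n, a (i - j) * bZf ω a j = if i = 0 then 1 else 0 := by
  have hn : (n : ℂ) ≠ 0 := Nat.cast_ne_zero.2 (NeZero.ne n)
  have h1 : ∀ j : ZMod n, a (i - j) * bZf ω a j
      = ∑ s : ZMod n, (n : ℂ)⁻¹ * ((yZf ω a s)⁻¹ * (ee ω (-(j * s)) * a (i - j))) := by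
    intro j
    rw [bZf, Finset.mul_sum, Finset.mul_sum]
    refine (Finset.sum_congr rfl fun s _ => ?_).symm
    ring
  rw [Finset.sum_congr rfl fun j _ => h1 j, Finset.sum_comm]
  have h2 : ∀ s : ZMod n, ∑ j : ZMod n, (n : ℂ)⁻¹ * ((yZf ω a s)⁻¹ * (ee ω (-(j * s)) * a (i - j)))
      = (n : ℂ)⁻¹ * ee ω (-(i * s)) := by
    intro s
    have h3 : ∑ j : ZMod n, ee ω (-(j * s)) * a (i - j) = ee ω (-(i * s)) * yZf ω a s := by
      rw [← Equiv.sum_comp (Equiv.subLeft i) (fun j => ee ω (-(j * s)) * a (i - j))]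
      rw [yZf, Finset.mul_sum]
      refine Finset.sum_congr rfl fun t _ => ?_
      simp only [Equiv.subLeft_apply, sub_sub_cancel]
      have h4 : (-((i - t) * s)) = -(i*s) + s * t := by ring
      rw [h4, ee_add hω]
      ring
    rw [← Finset.mul_sum, ← Finset.mul_sum, h3]
    field_simp [hy s]
  rw [Finset.sum_congr rfl fun s _ => h2 s, ← Finset.mul_sum]
  have h5 : ∑ s : ZMod n, ee ω (-(i * s)) = ∑ s : ZMod n, ee ω ((-i) * s) := by
    refine Finset.sum_congr rfl fun s _ => by ring_nf
  rw [h5, sum_ee hω]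
  by_cases h : i = 0
  · simp [h, inv_mul_cancel₀ hn]
  · simp [h, neg_eq_zero]


end DFT

section Char

lemma exists_char (p : ℕ) [hpf : Fact p.Prime] (u : (ZMod p)ˣ) (hu : orderOf u = p - 1)
    (ξ : ℂ) (hξ : ξ ^ (p - 1) = 1) :
    ∃ χ : DirichletCharacter ℂ p, ∀ k : ℕ, χ ((u : ZMod p) ^ k) = ξ ^ k := by
  have hp1 : p - 1 ≠ 0 := by have := hpf.out.two_le; omega
  have hξ0 : ξ ≠ 0 := fun h => by rw [h, zero_pow hp1] at hξ; exact one_ne_zero hξ.symm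
  set ξu : ℂˣ := Units.mk0 ξ hξ0 with hξudef
  have hξu : ξu ^ (p - 1) = 1 := Units.ext (by simpa [hξudef] using hξ)
  have hsurj : ∀ x : (ZMod p)ˣ, ∃ k : ℕ, u ^ k = x := by
    intro x
    have htop : Subgroup.zpowers u = ⊤ := by
      refine Subgroup.eq_top_of_card_eq _ ?_
      rw [Nat.card_zpowers, hu, Nat.card_eq_fintype_card, ZMod.card_units_eq_totient,
        Nat.totient_prime hpf.out]
    have hx : x ∈ Subgroup.zpowers u := htop ▸ Subgroup.mem_top x
    exact (Submonoid.mem_powers_iff _ _).mp (mem_powers_iff_mem_zpowers.mpr hx)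
  have key : ∀ a b : ℕ, u ^ a = u ^ b → ξu ^ a = ξu ^ b := by
    intro a b hab
    have h1 : a ≡ b [MOD p - 1] := by rw [← hu]; exact pow_eq_pow_iff_modEq.mp hab
    have h2 : orderOf ξu ∣ p - 1 := orderOf_dvd_of_pow_eq_one hξu
    exact pow_eq_pow_iff_modEq.mpr (h1.of_dvd h2)
  choose dl hdl using hsurj
  refine ⟨MulChar.ofUnitHom
    { toFun := fun x => ξu ^ dl x
      map_one' := by
        have h0 : u ^ dl 1 = u ^ 0 := by rw [hdl, pow_zero]
        simpa using key _ _ h0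
      map_mul' := by
        intro x y
        have h0 : u ^ dl (x * y) = u ^ (dl x + dl y) := by rw [pow_add, hdl, hdl, hdl]
        simpa [pow_add] using key _ _ h0 }, ?_⟩
  intro k
  have hcoe : (u : ZMod p) ^ k = ((u ^ k : (ZMod p)ˣ) : ZMod p) := by
    rw [Units.val_pow_eq_pow_val]
  rw [hcoe, MulChar.ofUnitHom_coe]
  have h0 : u ^ dl (u ^ k) = u ^ k := hdl _
  have := key _ _ h0
  simp only [MonoidHom.coe_mk, OneHom.coe_mk]
  rw [this]
  simp [hξudef]

lemma zmod_lfunction_const_mul {N : ℕ} [NeZero N] (c : ℂ) (Φ : ZMod N → ℂ) (s : ℂ) :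
    ZMod.LFunction (fun j => c * Φ j) s = c * ZMod.LFunction Φ s := by
  simp only [ZMod.LFunction, Finset.mul_sum]
  exact Finset.sum_congr rfl fun x _ => by ring

lemma even_L_neg_one_ne_zero {p : ℕ} [hpf : Fact p.Prime] (hp5 : 5 ≤ p)
    (χ : DirichletCharacter ℂ p) (hχ : χ.Even) :
    DirichletCharacter.LFunction χ (-1) ≠ 0 := by
  have hp0 : p ≠ 0 := by omega
  have hp1 : p ≠ 1 := by omega
  by_cases h1 : χ = 1
  · subst h1
    have : DirichletCharacter.LFunctionTrivChar p (-1)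
        = (∏ q ∈ p.primeFactors, (1 - (q : ℂ) ^ (-(-1) : ℂ))) * riemannZeta (-1) := by
      exact DirichletCharacter.LFunctionTrivChar_eq_mul_riemannZeta (by norm_num)
    rw [DirichletCharacter.LFunctionTrivChar] at this
    rw [this, hpf.out.primeFactors, Finset.prod_singleton]
    have hb2 : (bernoulli 2 : ℚ) = 1/6 := by
      rw [bernoulli_eq_bernoulli'_of_ne_one (by norm_num), bernoulli'_two]
    have hz : riemannZeta (-1) = -1 / 12 := by
      have h := riemannZeta_neg_nat_eq_bernoulli 1
      rw [show ((-1 : ℂ)) = -((1:ℕ):ℂ) by norm_num, h]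
      norm_num [hb2]
    rw [hz, neg_neg, cpow_one]
    refine mul_ne_zero ?_ (by norm_num)
    intro h
    have : (p : ℂ) = 1 := by linear_combination -h
    rw [show (1 : ℂ) = ((1:ℕ):ℂ) by norm_num] at this
    exact hp1 (Nat.cast_injective this)
  · -- nontrivial case
    have hprim : χ.IsPrimitive := by
      rcases hpf.out.eq_one_or_self_of_dvd _ χ.conductor_dvd_level with h | h
      · exact absurd (DirichletCharacter.eq_one_iff_conductor_eq_one.mpr h) h1
      · exact h
    have hΦ0 : χ (0 : ZMod p) = 0 := χ.map_zero' hp1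
    have hfe := ZMod.LFunction_one_sub (⇑χ) (s := 2)
      (fun k => by
        intro h
        have : (2 : ℂ).re = (-(k:ℂ)).re := by rw [h]
        simp at this
        norm_num at this
        nlinarith [this]) (Or.inl hΦ0)
    rw [show (1 - 2 : ℂ) = -1 by norm_num] at hfe
    have heven : (fun x : ZMod p => χ (-x)) = ⇑χ := funext fun x => hχ.to_fun x
    rw [heven] at hfe
    have hG : gaussSum χ ZMod.stdAddChar ≠ 0 := by
      refine gaussSum_ne_zero_of_nontrivial ?_ h1 (ZMod.isPrimitive_stdAddChar p)
      rw [ZMod.card]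
      exact_mod_cast Nat.cast_ne_zero.mpr hp0
    have hinvm1 : χ⁻¹ (-1 : ZMod p) = 1 := by
      have hu : IsUnit (-1 : ZMod p) := IsUnit.neg isUnit_one
      have : χ⁻¹ (-1) * χ (-1) = 1 := by
        rw [← MulChar.mul_apply, inv_mul_cancel, MulChar.one_apply hu]
      rw [hχ, mul_one] at this
      exact this
    have hdft : ZMod.dft (⇑χ) = fun k => gaussSum χ ZMod.stdAddChar * χ⁻¹ k := by
      funext k
      rw [hprim.fourierTransform_eq_inv_mul_gaussSum]
      rw [show (-k) = (-1) * k by ring, _root_.map_mul, hinvm1, one_mul, mul_comm]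
    rw [hdft, zmod_lfunction_const_mul] at hfe
    have hL2 : ZMod.LFunction (⇑χ⁻¹) 2 ≠ 0 := by
      have := DirichletCharacter.LFunction_ne_zero_of_one_le_re χ⁻¹
        (Or.inl (by simpa [inv_eq_one] using h1)) (s := 2) (by norm_num)
      exact this
    have hexp : cexp (Real.pi * I * 2 / 2) = -1 := by
      rw [show (Real.pi * I * 2 / 2 : ℂ) = Real.pi * I by ring, Complex.exp_pi_mul_I]
    have hexp' : cexp (-Real.pi * I * 2 / 2) = -1 := by
      rw [show (-Real.pi * I * 2 / 2 : ℂ) = -(Real.pi * I) by ring]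
      rw [Complex.exp_neg, Complex.exp_pi_mul_I]
      norm_num
    rw [hexp, hexp'] at hfe
    rw [DirichletCharacter.LFunction, hfe]
    have h2pi : (2 * (Real.pi : ℂ)) ≠ 0 := by
      simp [Real.pi_ne_zero]
    refine mul_ne_zero (mul_ne_zero (mul_ne_zero ?_ ?_) ?_) ?_
    · rw [show (2 - 1 : ℂ) = 1 by norm_num, cpow_one]
      exact_mod_cast Nat.cast_ne_zero.mpr hp0
    · rw [show (-2 : ℂ) = -(2:ℕ) by norm_num, cpow_neg, cpow_natCast]
      exact inv_ne_zero (pow_ne_zero _ h2pi)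
    · refine Complex.Gamma_ne_zero fun m => ?_
      intro h
      have : (2 : ℂ).re = (-(m:ℂ)).re := by rw [h]
      simp at this
      nlinarith [this]
    · have : (-1 : ℂ) * (gaussSum χ ZMod.stdAddChar * ZMod.LFunction (⇑χ⁻¹) 2)
          + (-1) * (gaussSum χ ZMod.stdAddChar * ZMod.LFunction (⇑χ⁻¹) 2)
          = -2 * (gaussSum χ ZMod.stdAddChar * ZMod.LFunction (⇑χ⁻¹) 2) := by ring
      rw [this]
      exact mul_ne_zero (by norm_num) (mul_ne_zero hG hL2)


end Char

lemma B2_one_sub (x : ℂ) : B2 (1 - x) = B2 x := by rw [B2, B2]; ring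

lemma bern2 (z : ℂ) :
    ((Polynomial.bernoulli 2).map (algebraMap ℚ ℂ)).eval z = z ^ 2 - z + 1 / 6 := by
  have hb2 : (bernoulli 2 : ℚ) = 1 / 6 := by
    rw [bernoulli_eq_bernoulli'_of_ne_one (by norm_num), bernoulli'_two]
  simp only [Polynomial.bernoulli, Finset.sum_range_succ, Finset.range_zero, Finset.sum_empty,
    zero_add, bernoulli_zero, bernoulli_one, hb2, Polynomial.map_add, Polynomial.map_monomial,
    Polynomial.eval_add, Polynomial.eval_monomial]
  norm_num
  ring

section main

variable {p n : ℕ} [hpf : Fact p.Prime] (hp5 : 5 ≤ p) (hpn : p = 2 * n + 1)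
  {α : ℤ} (hα : orderOf (α : ZMod p) = p - 1)

lemma fact_one_lt : Fact (1 < p) := ⟨hpf.out.one_lt⟩

include hα in
lemma alpha_isUnit : IsUnit (α : ZMod p) := by
  have h0 : 0 < orderOf (α : ZMod p) := by rw [hα]; have := hpf.out.two_le; omega
  exact (orderOf_pos_iff.mp h0).isUnit

include hα in
lemma exists_unit : ∃ u : (ZMod p)ˣ, ((u : ZMod p) = (α : ZMod p)) ∧ orderOf u = p - 1 := by
  refine ⟨(alpha_isUnit hα).unit, IsUnit.unit_spec _, ?_⟩
  rw [← orderOf_units, IsUnit.unit_spec, hα]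

include hα hpn in
lemma alpha_pow_n_eq_neg_one (hn2 : 2 ≤ n) : (α : ZMod p) ^ n = -1 := by
  have hsq : ((α : ZMod p) ^ n) * ((α : ZMod p) ^ n) = 1 := by
    rw [← pow_add]
    have he : n + n = p - 1 := by omega
    rw [he, ← hα, pow_orderOf_eq_one]
  rcases mul_self_eq_one_iff.mp hsq with h | h
  · exfalso
    have hdvd : orderOf (α : ZMod p) ∣ n := orderOf_dvd_of_pow_eq_one h
    rw [hα] at hdvd
    have := Nat.le_of_dvd (by omega) hdvd
    omega
  · exact h

lemma fract_val (t : ℕ) :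
    (Int.fract ((α : ℝ) ^ t / (p : ℝ)) : ℝ) = ((((α : ZMod p) ^ t).val : ℝ)) / p := by
  haveI : NeZero p := ⟨hpf.out.ne_zero⟩
  have hp0 : 0 < p := hpf.out.pos
  have hpz : (p : ℤ) ≠ 0 := by exact_mod_cast hp0.ne'
  have hpr : (p : ℝ) ≠ 0 := by exact_mod_cast hp0.ne'
  set a : ℤ := α ^ t with ha
  have h1 : (α : ℝ) ^ t = ((a : ℤ) : ℝ) := by push_cast [ha]; ring
  have h2 : (α : ZMod p) ^ t = ((a : ℤ) : ZMod p) := by push_cast [ha]; ring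
  have h3 : ((((a : ℤ) : ZMod p)).val : ℤ) = a % (p : ℤ) := ZMod.val_intCast a
  have hdr : ((p : ℝ)) * ((a / p : ℤ) : ℝ) + ((a % p : ℤ) : ℝ) = (a : ℝ) := by
    exact_mod_cast congrArg (fun z : ℤ => (z : ℝ)) (Int.mul_ediv_add_emod a p)
  have hsplit : (a : ℝ) / p = ((a / p : ℤ) : ℝ) + ((a % p : ℤ) : ℝ) / (p : ℝ) := by
    field_simp
    linarith [hdr]
  rw [h1, h2, hsplit, Int.fract_intCast_add, Int.fract_eq_self.mpr ⟨?_, ?_⟩]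
  · have : ((((a : ℤ) : ZMod p)).val : ℝ) = ((a % p : ℤ) : ℝ) := by exact_mod_cast h3
    rw [this]
  · have := Int.emod_nonneg a hpz
    positivity
  · rw [div_lt_one (by exact_mod_cast hp0)]
    exact_mod_cast Int.emod_lt_of_pos a (by exact_mod_cast hp0)

lemma aC_eq_val (t : ℕ) :
    aC p α t = ((p : ℂ) / 2) * B2 ((((α : ZMod p) ^ t).val : ℂ) / p) := by
  rw [aC, fract_val (α := α) t]
  have hc : ((((((α : ZMod p) ^ t).val : ℝ)) / p : ℝ) : ℂ) = (((α : ZMod p) ^ t).val : ℂ) / p := by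
    push_cast
    ring
  rw [hc]

include hα in
lemma sum_zmodp (f : ZMod p → ℂ) :
    ∑ x : ZMod p, f x = f 0 + ∑ k ∈ Finset.range (p - 1), f ((α : ZMod p) ^ k) := by
  haveI : NeZero p := ⟨hpf.out.ne_zero⟩
  haveI : Fact (1 < p) := ⟨hpf.out.one_lt⟩
  have hp0 : p ≠ 0 := hpf.out.ne_zero
  have hinj : ∀ k1 ∈ Finset.range (p-1), ∀ k2 ∈ Finset.range (p-1),
      (α : ZMod p) ^ k1 = (α : ZMod p) ^ k2 → k1 = k2 := by
    intro k1 h1 k2 h2 h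
    rw [Finset.mem_range] at h1 h2
    obtain ⟨u, hcoe, hord⟩ := exists_unit hα
    have hu : u ^ k1 = u ^ k2 := Units.ext (by
      rw [Units.val_pow_eq_pow_val, Units.val_pow_eq_pow_val, hcoe]
      exact h)
    have hm := pow_eq_pow_iff_modEq.mp hu
    rw [hord] at hm
    rwa [Nat.ModEq, Nat.mod_eq_of_lt h1, Nat.mod_eq_of_lt h2] at hm
  set S : Finset (ZMod p) := (Finset.range (p - 1)).image (fun k => (α : ZMod p) ^ k) with hS
  have hcardS : S.card = p - 1 := by
    rw [hS, Finset.card_image_of_injOn fun x hx y hy => hinj x hx y hy, Finset.card_range]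
  have hsub : S ⊆ Finset.univ.erase 0 := by
    intro x hx
    rw [hS, Finset.mem_image] at hx
    obtain ⟨k, _, rfl⟩ := hx
    exact Finset.mem_erase.mpr ⟨((alpha_isUnit hα).pow k).ne_zero, Finset.mem_univ _⟩
  have hSe : S = Finset.univ.erase 0 := by
    refine Finset.eq_of_subset_of_card_le hsub ?_
    rw [Finset.card_erase_of_mem (Finset.mem_univ _), Finset.card_univ, ZMod.card, hcardS]
  rw [← Finset.add_sum_erase _ f (Finset.mem_univ (0 : ZMod p)), ← hSe, hS,
    Finset.sum_image hinj]

include hα hpn in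
lemma char_sum_eq (hn2 : 2 ≤ n) (χ : DirichletCharacter ℂ p) (ω : ℂ) (hω1 : ω ^ n = 1) (s : ℕ)
    (hχval : ∀ k : ℕ, χ ((α : ZMod p) ^ k) = (ω ^ s) ^ k) :
    ∑ x : ZMod p, χ x * B2 ((x.val : ℂ) / p)
      = 2 * ∑ t ∈ Finset.range n, ω ^ (s * t) * B2 (((((α : ZMod p) ^ t).val : ℂ)) / p) := by
  haveI : NeZero p := ⟨hpf.out.ne_zero⟩
  haveI : Fact (1 < p) := ⟨hpf.out.one_lt⟩
  have hp1 : p ≠ 1 := by omega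
  rw [sum_zmodp hα (fun x => χ x * B2 ((x.val : ℂ) / p))]
  rw [χ.map_zero' hp1, zero_mul, zero_add]
  have hsplit : p - 1 = n + n := by omega
  rw [hsplit, Finset.sum_range_add]
  have hneg : ∀ k : ℕ, (α : ZMod p) ^ (n + k) = -((α : ZMod p) ^ k) := by
    intro k
    rw [pow_add, alpha_pow_n_eq_neg_one hpn hα hn2]
    ring
  have hterm : ∀ k : ℕ, χ ((α : ZMod p) ^ (n + k)) * B2 (((((α : ZMod p) ^ (n + k)).val : ℂ)) / p)
      = χ ((α : ZMod p) ^ k) * B2 (((((α : ZMod p) ^ k).val : ℂ)) / p) := by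
    intro k
    have hx0 : (α : ZMod p) ^ k ≠ 0 := ((alpha_isUnit hα).pow k).ne_zero
    have hval : (((-((α : ZMod p) ^ k)).val : ℂ)) = (p : ℂ) - ((((α : ZMod p) ^ k).val : ℂ)) := by
      rw [ZMod.neg_val, if_neg hx0]
      have hle : ((α : ZMod p) ^ k).val ≤ p := le_of_lt (ZMod.val_lt _)
      push_cast [Nat.cast_sub hle]
      ring
    have hchi : χ (-((α : ZMod p) ^ k)) = χ ((α : ZMod p) ^ k) := by
      have hm1 : (-1 : ZMod p) = (α : ZMod p) ^ n := (alpha_pow_n_eq_neg_one hpn hα hn2).symm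
      rw [show -((α : ZMod p) ^ k) = (-1) * ((α : ZMod p) ^ k) by ring, _root_.map_mul, hm1, hχval n]
      rw [pow_right_comm ω s n, hω1, one_pow, one_mul]
    rw [hneg k, hchi, hval]
    have hpc : (p : ℂ) ≠ 0 := by exact_mod_cast hpf.out.ne_zero
    have : ((p : ℂ) - ((((α : ZMod p) ^ k).val : ℂ))) / p
        = 1 - ((((α : ZMod p) ^ k).val : ℂ)) / p := by field_simp
    rw [this, B2_one_sub]
  rw [Finset.sum_congr rfl fun k _ => hterm k, two_mul]
  have hx : ∀ t : ℕ, χ ((α : ZMod p) ^ t) = ω ^ (s * t) := by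
    intro t
    rw [hχval t, ← pow_mul]
  rw [Finset.sum_congr rfl fun t _ => by rw [hx t]]

lemma Lval (χ : DirichletCharacter ℂ p) :
    ZMod.LFunction (⇑χ) (-1) = -((p : ℂ) / 2) * ∑ x : ZMod p, χ x * B2 ((x.val : ℂ) / p) := by
  haveI : NeZero p := ⟨hpf.out.ne_zero⟩
  have hp0 : 0 < p := hpf.out.pos
  rw [ZMod.LFunction, neg_neg, cpow_one]
  have hterm : ∀ x : ZMod p,
      HurwitzZeta.hurwitzZeta (ZMod.toAddCircle x) (-1) = -(1/2) * B2 ((x.val : ℂ) / p) := by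
    intro x
    have hx : ((x.val / p : ℝ)) ∈ Set.Icc (0:ℝ) 1 := by
      constructor
      · positivity
      · rw [div_le_one (by exact_mod_cast hp0)]
        exact_mod_cast le_of_lt x.val_lt
    have h1 := HurwitzZeta.hurwitzZeta_neg_nat (k := 1) one_ne_zero hx
    rw [ZMod.toAddCircle_apply, show (-1 : ℂ) = -((1:ℕ):ℂ) by norm_num, h1]
    have hz : (((x.val / p : ℝ)) : ℂ) = (x.val : ℂ) / p := by push_cast; ring
    rw [show (1 : ℕ) + 1 = 2 by norm_num, bern2, hz, B2]
    norm_num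
  rw [Finset.sum_congr rfl fun x _ => by rw [hterm x], Finset.mul_sum, Finset.mul_sum]
  exact Finset.sum_congr rfl fun x _ => by ring

include hp5 hpn hα in
lemma yC_ne_zero (hn2 : 2 ≤ n) (ω : ℂ) (hω1 : ω ^ n = 1) (s : ℕ) : yC p n α ω s ≠ 0 := by
  obtain ⟨u, hcoe, hord⟩ := exists_unit hα
  obtain ⟨χ, hχval'⟩ := exists_char p u hord (ω ^ s) (by
    rw [pow_right_comm, show p - 1 = n * 2 by omega, pow_mul, hω1, one_pow, one_pow])
  have hχval : ∀ k, χ ((α : ZMod p) ^ k) = (ω ^ s) ^ k := fun k => by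
    rw [← hcoe]; exact hχval' k
  have heven : χ.Even := by
    show χ (-1) = 1
    rw [← alpha_pow_n_eq_neg_one hpn hα hn2, hχval n, pow_right_comm, hω1, one_pow]
  have hL := even_L_neg_one_ne_zero hp5 χ heven
  have hLval := Lval χ
  have hsum := char_sum_eq hpn hα hn2 χ ω hω1 s hχval
  set SS : ℂ := ∑ t ∈ Finset.range n, ω ^ (s * t) * B2 (((((α : ZMod p) ^ t).val : ℂ)) / p)
    with hSS
  have hyc : yC p n α ω s = ((p : ℂ) / 2) * SS := by
    rw [yC, hSS, Finset.mul_sum]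
    refine Finset.sum_congr rfl fun t _ => ?_
    rw [aC_eq_val (α := α) t]
    ring
  intro h0
  refine hL ?_
  have hpc : (p : ℂ) ≠ 0 := by exact_mod_cast hpf.out.ne_zero
  have hSSz : SS = 0 := by
    rw [hyc] at h0
    rcases mul_eq_zero.mp h0 with h | h
    · exact absurd h (by simp [hpc])
    · exact h
  rw [DirichletCharacter.LFunction, hLval, hsum, hSSz]
  ring

end main

def aZ (p : ℕ) (α : ℤ) (n : ℕ) [NeZero n] : ZMod n → ℂ := fun t => aC p α t.val

def cZf (p : ℕ) (α : ℤ) {n : ℕ} [NeZero n] (ω : ℂ) (j : ZMod n) : ℂ :=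
  bZf ω (aZ p α n) (-j) - bZf ω (aZ p α n) (1 - j)

section bridge

variable {p n : ℕ} [NeZero n] {α : ℤ} {ω : ℂ} (hω : IsPrimitiveRoot ω n)
include hω

lemma yZ_eq (s : ZMod n) : yZf ω (aZ p α n) s = yC p n α ω s.val := by
  rw [yC, ← sum_zmod (fun t => ω ^ (s.val * t) * aC p α t)]
  refine Finset.sum_congr rfl fun t _ => ?_
  congr 1
  rw [ee, ZMod.val_mul, pow_mod_eq hω]

lemma bZ_eq (j : ZMod n) : bZf ω (aZ p α n) j = bC p n α ω j.val := by
  rw [bC, ← sum_zmod (fun s => ω ^ (-(j.val * s : ℤ)) * (yC p n α ω s)⁻¹), bZf, one_div]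
  congr 1
  refine Finset.sum_congr rfl fun s _ => ?_
  rw [yZ_eq hω s]
  congr 1
  rw [ee_neg hω, ee, ZMod.val_mul, pow_mod_eq hω, ← zpow_natCast ω (j.val * s.val), ← _root_.zpow_neg]
  norm_num

lemma val_natCast_lt {j : ℕ} (hj : j < n) : ((j : ZMod n)).val = j := ZMod.val_cast_of_lt hj

omit hω in
lemma neg_natCast_eq {j : ℕ} (hj0 : 0 < j) (hj : j ≤ n) :
    -((j : ZMod n) : ZMod n) = ((n - j : ℕ) : ZMod n) := by
  have h1 : ((n - j : ℕ) : ZMod n) = (n : ZMod n) - (j : ZMod n) := by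
    push_cast [Nat.cast_sub hj]
    ring
  rw [h1, ZMod.natCast_self]
  ring

lemma cC_eq (hn2 : 2 ≤ n) {j : ℕ} (hj : j < n) :
    cC p n α ω j = cZf p α ω (j : ZMod n) := by
  have hval0 : ((0 : ZMod n)).val = 0 := ZMod.val_zero
  have hval1 : ((1 : ZMod n)).val = 1 := by
    rw [← Nat.cast_one]
    exact ZMod.val_cast_of_lt (by omega)
  rcases Nat.eq_zero_or_pos j with rfl | hj0
  · rw [cC, if_pos rfl, cZf]
    rw [Nat.cast_zero, neg_zero, sub_zero, bZ_eq hω, bZ_eq hω, hval0, hval1]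
  rcases Nat.eq_or_lt_of_le hj0 with hj1 | hj2
  · -- j = 1
    rw [← hj1, cC, if_neg (by omega), if_pos rfl, cZf]
    have h1 : -((1 : ℕ) : ZMod n) = ((n - 1 : ℕ) : ZMod n) := neg_natCast_eq (by omega) (by omega)
    have h2 : (1 : ZMod n) - ((1:ℕ) : ZMod n) = 0 := by push_cast; ring
    rw [h1, h2, bZ_eq hω, bZ_eq hω, hval0, ZMod.val_cast_of_lt (by omega)]
  · -- 2 ≤ j
    rw [cC, if_neg (by omega), if_neg (by omega), cZf]
    have h1 : -((j : ℕ) : ZMod n) = ((n - j : ℕ) : ZMod n) := neg_natCast_eq (by omega) (by omega)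
    have h2 : (1 : ZMod n) - ((j:ℕ) : ZMod n) = ((n + 1 - j : ℕ) : ZMod n) := by
      have : ((n + 1 - j : ℕ) : ZMod n) = ((n : ℕ) : ZMod n) + 1 - j := by
        push_cast [Nat.cast_sub (by omega : j ≤ n + 1)]
        ring
      rw [this, ZMod.natCast_self]
      ring
    rw [h1, h2, bZ_eq hω, bZ_eq hω, ZMod.val_cast_of_lt (by omega),
      ZMod.val_cast_of_lt (by omega)]

omit hω in
lemma sum_apply_zmod (f : ZMod n → ℂ) :
    ∑ j ∈ Finset.range n, f (j : ZMod n) = ∑ x : ZMod n, f x := by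
  rw [← sum_zmod (fun m => f (m : ZMod n))]
  exact Finset.sum_congr rfl fun x _ => by rw [natCast_val]

lemma conv2 (hy : ∀ s, yZf ω (aZ p α n) s ≠ 0) (i : ZMod n) :
    ∑ j : ZMod n, cZf p α ω j * aZ p α n (i + j)
      = (if i = 0 then 1 else 0) - (if i = -1 then 1 else 0) := by
  have hsplit : ∑ j : ZMod n, cZf p α ω j * aZ p α n (i + j)
      = (∑ j : ZMod n, aZ p α n (i + j) * bZf ω (aZ p α n) (-j))
        - ∑ j : ZMod n, aZ p α n (i + j) * bZf ω (aZ p α n) (1 - j) := by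
    rw [← Finset.sum_sub_distrib]
    exact Finset.sum_congr rfl fun j _ => by rw [cZf]; ring
  rw [hsplit]
  have h1 : ∑ j : ZMod n, aZ p α n (i + j) * bZf ω (aZ p α n) (-j)
      = if i = 0 then 1 else 0 := by
    rw [← conv hω hy i]
    rw [← Equiv.sum_comp (Equiv.neg (ZMod n))
      (fun j => aZ p α n (i - j) * bZf ω (aZ p α n) j)]
    refine Finset.sum_congr rfl fun j _ => ?_
    simp only [Equiv.neg_apply, neg_neg, sub_neg_eq_add]
  have h2 : ∑ j : ZMod n, aZ p α n (i + j) * bZf ω (aZ p α n) (1 - j)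
      = if i + 1 = 0 then 1 else 0 := by
    rw [← conv hω hy (i + 1)]
    rw [← Equiv.sum_comp (Equiv.subLeft (1 : ZMod n))
      (fun j => aZ p α n (i + 1 - j) * bZf ω (aZ p α n) j)]
    refine Finset.sum_congr rfl fun j _ => ?_
    simp only [Equiv.subLeft_apply, sub_sub_cancel]
    congr 2
    ring
  rw [h1, h2]
  have hiff : (i + 1 = 0) ↔ (i = -1) := by
    constructor
    · exact fun h => eq_neg_of_add_eq_zero_left h
    · intro h; rw [h]; exact neg_add_cancel 1
  simp only [hiff]

def Amat (p : ℕ) (α : ℤ) (n : ℕ) [NeZero n] : Matrix (ZMod n) (ZMod n) ℂ :=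
  Matrix.of fun i j => aZ p α n (i + j)

lemma AX_eq_one (hy : ∀ s, yZf ω (aZ p α n) s ≠ 0) :
    Amat p α n * (Matrix.of fun j k : ZMod n => bZf ω (aZ p α n) (-(j + k))) = 1 := by
  ext i k
  rw [Matrix.mul_apply]
  simp only [Matrix.of_apply]
  have hre := Equiv.sum_comp ((Equiv.neg (ZMod n)).trans (Equiv.subRight k))
    (fun j => (Amat p α n) i j * bZf ω (aZ p α n) (-(j + k)))
  rw [← hre]
  have : ∀ j : ZMod n, (Amat p α n) i (((Equiv.neg (ZMod n)).trans (Equiv.subRight k)) j)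
      * bZf ω (aZ p α n) (-((((Equiv.neg (ZMod n)).trans (Equiv.subRight k)) j) + k))
      = aZ p α n ((i - k) - j) * bZf ω (aZ p α n) j := by
    intro j
    simp only [Equiv.trans_apply, Equiv.neg_apply, Equiv.subRight_apply, Amat, Matrix.of_apply]
    congr 2
    · ring
    · ring
  rw [Finset.sum_congr rfl fun j _ => this j, conv hω hy (i - k), Matrix.one_apply]
  congr 1
  rw [eq_iff_iff, sub_eq_zero]

lemma mulVec_unique (hy : ∀ s, yZf ω (aZ p α n) s ≠ 0) {x y : ZMod n → ℂ}
    (h : (Amat p α n).mulVec x = (Amat p α n).mulVec y) : x = y := by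
  set X := Matrix.of fun j k : ZMod n => bZf ω (aZ p α n) (-(j + k)) with hX
  have h1 : X * Amat p α n = 1 := mul_eq_one_comm.mp (AX_eq_one hω hy)
  calc x = (1 : Matrix (ZMod n) (ZMod n) ℂ).mulVec x := by rw [Matrix.one_mulVec]
  _ = (X * Amat p α n).mulVec x := by rw [h1]
  _ = X.mulVec ((Amat p α n).mulVec x) := by rw [← Matrix.mulVec_mulVec]
  _ = X.mulVec ((Amat p α n).mulVec y) := by rw [h]
  _ = (X * Amat p α n).mulVec y := by rw [Matrix.mulVec_mulVec]
  _ = y := by rw [h1, Matrix.one_mulVec]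

end bridge

def B2Q (x : ℚ) : ℚ := x ^ 2 - x + 1 / 6

def aQv (p : ℕ) (α : ℤ) (n : ℕ) [NeZero n] : ZMod n → ℚ :=
  fun t => ((p : ℚ) / 2) * B2Q ((((α : ZMod p) ^ t.val).val : ℚ) / p)

def Aqmat (p : ℕ) (α : ℤ) (n : ℕ) [NeZero n] : Matrix (ZMod n) (ZMod n) ℚ :=
  Matrix.of fun i j => aQv p α n (i + j)

def vQ (n : ℕ) [NeZero n] : ZMod n → ℚ :=
  fun i => (if i = 0 then 1 else 0) - (if i = -1 then 1 else 0)

def cQv (p : ℕ) (α : ℤ) (n : ℕ) [NeZero n] : ZMod n → ℚ :=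
  (Aqmat p α n)⁻¹.mulVec (vQ n)

section rat

variable {p n : ℕ} [NeZero n] [hpf : Fact p.Prime] {α : ℤ} {ω : ℂ}
  (hω : IsPrimitiveRoot ω n) (hy : ∀ s, yZf ω (aZ p α n) s ≠ 0)

lemma aZ_rat (t : ZMod n) : aZ p α n t = ((aQv p α n t : ℚ) : ℂ) := by
  rw [aZ, aC_eq_val t.val, aQv, B2Q, B2]
  push_cast
  ring

lemma Amat_eq_map : Amat p α n = (Aqmat p α n).map (Rat.castHom ℂ) := by
  ext i j
  simp only [Amat, Aqmat, Matrix.map_apply, Matrix.of_apply, aZ_rat, Rat.coe_castHom]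

include hω hy in
lemma detAq_unit : IsUnit (Aqmat p α n).det := by
  have h := congrArg Matrix.det (AX_eq_one hω hy)
  rw [Matrix.det_mul, Matrix.det_one] at h
  have hA : (Amat p α n).det ≠ 0 := left_ne_zero_of_mul_eq_one h
  rw [Amat_eq_map] at hA
  have hdm : ((Aqmat p α n).map (Rat.castHom ℂ)).det = (((Aqmat p α n).det : ℚ) : ℂ) := by
    rw [show (Aqmat p α n).map ⇑(Rat.castHom ℂ) = (Rat.castHom ℂ).mapMatrix (Aqmat p α n) from
      rfl, ← RingHom.map_det]
    rfl
  rw [hdm] at hA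
  rw [isUnit_iff_ne_zero]
  intro h0
  rw [h0] at hA
  simp at hA

include hω hy in
lemma A_mulVec_cQ :
    (Amat p α n).mulVec (fun j => ((cQv p α n j : ℚ) : ℂ)) = fun i => ((vQ n i : ℚ) : ℂ) := by
  have hq : (Aqmat p α n).mulVec (cQv p α n) = vQ n := by
    rw [cQv, Matrix.mulVec_mulVec, Matrix.mul_nonsing_inv _ (detAq_unit hω hy),
      Matrix.one_mulVec]
  funext i
  have hqi := congrFun hq i
  rw [Matrix.mulVec, dotProduct] at hqi ⊢
  rw [← hqi]
  push_cast
  refine Finset.sum_congr rfl fun j _ => ?_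
  rw [Amat_eq_map]
  simp only [Matrix.map_apply, Rat.coe_castHom]

include hω hy in
lemma A_mulVec_cZf :
    (Amat p α n).mulVec (fun j => cZf p α ω j) = fun i => ((vQ n i : ℚ) : ℂ) := by
  funext i
  rw [Matrix.mulVec, dotProduct]
  have : ∀ j : ZMod n, (Amat p α n) i j * cZf p α ω j = cZf p α ω j * aZ p α n (i + j) := by
    intro j
    rw [Amat, Matrix.of_apply]
    ring
  rw [Finset.sum_congr rfl fun j _ => this j, conv2 hω hy i, vQ]
  push_cast
  simp only [apply_ite (fun q : ℚ => (q : ℂ))]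
  norm_num

include hω hy in
lemma cZf_rat (j : ZMod n) : cZf p α ω j = ((cQv p α n j : ℚ) : ℂ) := by
  have := mulVec_unique hω hy (x := fun j => cZf p α ω j)
    (y := fun j => ((cQv p α n j : ℚ) : ℂ))
    (by rw [A_mulVec_cZf hω hy, A_mulVec_cQ hω hy])
  exact congrFun this j

end rat

end Aux

/-- the `c_i` are rational; with `L` the least positive integer clearing their
denominators and `T = ∑ L·c_i·α^{2i}`, the number `N = (p/gcd(p,T))·L` is the least positive
integer for which there are integers `e_0,…,e_{n−1}` with `p ∣ ∑ e_i α^{2i}` and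
`∑_j e_j a_{(i+j) mod n} = N, −N, 0` according as `i = 0`, `i = n−1`, or otherwise.
(This `N` is the order of the class of `P_0 − P_{n−1}` in the rational cuspidal group.) -/
theorem statement17 (p n : ℕ) (hp : p.Prime) (hp5 : 5 ≤ p) (hn : n = (p - 1) / 2)
    (α : ℤ) (hα : orderOf (α : ZMod p) = p - 1)
    (ω : ℂ) (hω : IsPrimitiveRoot ω n) :
    (∀ i < n, ∃ q : ℚ, cC p n α ω i = (q : ℂ)) ∧
    ∀ L : ℕ,
      (0 < L ∧ (∀ i < n, ∃ z : ℤ, (L : ℂ) * cC p n α ω i = (z : ℂ)) ∧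
        ∀ L' : ℕ, 0 < L' → (∀ i < n, ∃ z : ℤ, (L' : ℂ) * cC p n α ω i = (z : ℂ)) → L ≤ L') →
      ∀ T : ℤ,
        (T : ℂ) = ∑ i ∈ Finset.range n, (L : ℂ) * cC p n α ω i * (α : ℂ) ^ (2 * i) →
        IsLeast
          {N : ℕ | 0 < N ∧ ∃ e : ℕ → ℤ,
            ((p : ℤ) ∣ ∑ i ∈ Finset.range n, e i * α ^ (2 * i)) ∧
            ∀ i < n,
              (∑ j ∈ Finset.range n, (e j : ℂ) * aC p α ((i + j) % n)) =
                if i = 0 then (N : ℂ) else if i = n - 1 then -(N : ℂ) else 0}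
          (p / Nat.gcd p T.natAbs * L) := by
  haveI hpf : Fact p.Prime := ⟨hp⟩
  have hp2 : p % 2 = 1 := Nat.odd_iff.mp (hp.odd_of_ne_two (by omega))
  have hpn : p = 2 * n + 1 := by omega
  have hn2 : 2 ≤ n := by omega
  haveI hnz : NeZero n := ⟨by omega⟩
  have hy : ∀ s : ZMod n, yZf ω (aZ p α n) s ≠ 0 := by
    intro s
    rw [yZ_eq hω s]
    exact yC_ne_zero hp5 hpn hα hn2 ω hω.pow_eq_one s.val
  have hccq : ∀ i, i < n → cC p n α ω i = ((cQv p α n (i : ZMod n) : ℚ) : ℂ) := by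
    intro i hi
    rw [cC_eq hω hn2 hi]
    exact cZf_rat hω hy _
  have hcast0 : ∀ i : ℕ, i < n → (((i : ZMod n) = 0) ↔ i = 0) := by
    intro i hi
    constructor
    · intro h
      have h2 := ZMod.val_cast_of_lt hi
      rw [h] at h2
      simpa using h2.symm
    · intro h; simp [h]
  have hm1cast : ((n - 1 : ℕ) : ZMod n) = -1 := by
    have h := neg_natCast_eq (n := n) (j := 1) (by omega) (by omega)
    rw [Nat.cast_one] at h
    exact h.symm
  have hcastm1 : ∀ i : ℕ, i < n → (((i : ZMod n) = -1) ↔ i = n - 1) := by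
    intro i hi
    rw [← hm1cast]
    constructor
    · intro h
      have h2 : ((i : ZMod n)).val = ((n - 1 : ℕ) : ZMod n).val := by rw [h]
      rwa [ZMod.val_cast_of_lt hi, ZMod.val_cast_of_lt (by omega)] at h2
    · intro h; rw [h]
  refine ⟨fun i hi => ⟨cQv p α n (i : ZMod n), hccq i hi⟩, ?_⟩
  intro L hL T hT
  obtain ⟨hL0, hLz, hLmin⟩ := hL
  choose zf hzf using hLz
  set Z : ℕ → ℤ := fun i => if h : i < n then zf i h else 0 with hZdef
  have hZ : ∀ i, i < n → ((Z i : ℤ) : ℂ) = (L : ℂ) * cC p n α ω i := by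
    intro i hi
    have : Z i = zf i hi := by rw [hZdef]; simp only [dif_pos hi]
    rw [this]
    exact (hzf i hi).symm
  have hdvd_of : ∀ M : ℕ, 0 < M →
      (∀ i < n, ∃ z : ℤ, (M : ℂ) * cC p n α ω i = z) → L ∣ M := by
    intro M hM hMz
    by_contra hnd
    have hr0 : M % L ≠ 0 := fun h => hnd (Nat.dvd_of_mod_eq_zero h)
    have hrpos : 0 < M % L := Nat.pos_of_ne_zero hr0
    have hrlt : M % L < L := Nat.mod_lt _ hL0
    have hrz : ∀ i < n, ∃ z : ℤ, ((M % L : ℕ) : ℂ) * cC p n α ω i = z := by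
      intro i hi
      obtain ⟨z, hz⟩ := hMz i hi
      obtain ⟨q, hq⟩ : ∃ q : ℕ, q = M / L := ⟨M / L, rfl⟩
      obtain ⟨r, hr⟩ : ∃ r : ℕ, r = M % L := ⟨M % L, rfl⟩
      refine ⟨z - (q : ℤ) * Z i, ?_⟩
      have hmd : ((r : ℕ) : ℂ) + (L : ℂ) * ((q : ℕ) : ℂ) = (M : ℂ) := by
        rw [hq, hr]
        exact_mod_cast congrArg (fun t : ℕ => (t : ℂ)) (Nat.mod_add_div M L)
      rw [← hr]
      push_cast
      linear_combination hz + (q : ℂ) * hZ i hi + cC p n α ω i * hmd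
    exact absurd (hLmin _ hrpos hrz) (by omega)
  have hTz : T = ∑ i ∈ Finset.range n, Z i * α ^ (2 * i) := by
    have hc : (T : ℂ) = ((∑ i ∈ Finset.range n, Z i * α ^ (2 * i) : ℤ) : ℂ) := by
      rw [hT]
      push_cast
      refine Finset.sum_congr rfl fun i hi => ?_
      rw [← hZ i (Finset.mem_range.mp hi)]
    exact_mod_cast hc
  set g := Nat.gcd p T.natAbs with hgdef
  have hgp : g ∣ p := Nat.gcd_dvd_left _ _
  have hgT : g ∣ T.natAbs := Nat.gcd_dvd_right _ _
  have hgpos : 0 < g := Nat.gcd_pos_of_pos_left _ hp.pos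
  have hpg_pos : 0 < p / g := Nat.div_pos (Nat.le_of_dvd hp.pos hgp) hgpos
  have hsum_gen : ∀ (w : ℕ → ℤ) (C : ℂ),
      (∀ j, j < n → ((w j : ℤ) : ℂ) = C * cZf p α ω (j : ZMod n)) →
      ∀ i, i < n → ∑ j ∈ Finset.range n, ((w j : ℤ) : ℂ) * aC p α ((i + j) % n)
        = C * ((if i = 0 then 1 else 0) - (if i = n - 1 then 1 else 0)) := by
    intro w C hw i hi
    have hterm : ∀ j ∈ Finset.range n, ((w j : ℤ) : ℂ) * aC p α ((i + j) % n)
        = C * (cZf p α ω (j : ZMod n) * aZ p α n ((i : ZMod n) + (j : ZMod n))) := by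
      intro j hj
      rw [hw j (Finset.mem_range.mp hj)]
      have ha : aC p α ((i + j) % n) = aZ p α n ((i : ZMod n) + (j : ZMod n)) := by
        rw [aZ]
        have hcast : ((i : ZMod n) + (j : ZMod n)) = ((i + j : ℕ) : ZMod n) := by
          push_cast; ring
        rw [hcast, ZMod.val_natCast]
      rw [ha]; ring
    rw [Finset.sum_congr rfl hterm, ← Finset.mul_sum,
      sum_apply_zmod (fun x => cZf p α ω x * aZ p α n ((i : ZMod n) + x)),
      conv2 hω hy ((i : ZMod n))]
    simp only [hcast0 i hi, hcastm1 i hi]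
  constructor
  · -- membership
    refine ⟨Nat.mul_pos hpg_pos hL0, fun j => ((p / g : ℕ) : ℤ) * Z j, ?_, ?_⟩
    · have hsum : ∑ i ∈ Finset.range n, (((p / g : ℕ) : ℤ) * Z i) * α ^ (2 * i)
          = ((p / g : ℕ) : ℤ) * T := by
        rw [hTz, Finset.mul_sum]
        exact Finset.sum_congr rfl fun i _ => by ring
      rw [hsum]
      rcases hp.eq_one_or_self_of_dvd _ hgp with h1 | hpp
      · rw [h1, Nat.div_one]
        exact Dvd.dvd.mul_right dvd_rfl T
      · have hpT : (p : ℤ) ∣ T := by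
          refine Int.dvd_natAbs.mp ?_
          exact_mod_cast Int.natCast_dvd_natCast.mpr (hpp ▸ hgT)
        exact Dvd.dvd.mul_left hpT _
    · intro i hi
      have hw : ∀ j, j < n → ((((p / g : ℕ) : ℤ) * Z j : ℤ) : ℂ)
          = (((p / g : ℕ) : ℂ) * (L : ℂ)) * cZf p α ω (j : ZMod n) := by
        intro j hj
        rw [Int.cast_mul, Int.cast_natCast, hZ j hj, cC_eq hω hn2 hj]
        ring
      rw [hsum_gen _ _ hw i hi]
      have hn1 : n - 1 ≠ 0 := by omega
      have hNc : (((p / g * L : ℕ)) : ℂ) = ((p / g : ℕ) : ℂ) * (L : ℂ) := by push_cast; ring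
      split_ifs with h1 h2
      · omega
      · rw [hNc]; ring
      · rw [hNc]; ring
      · ring
  · -- lower bound
    rintro N ⟨hN0, e, hdvdN, hsums⟩
    have hAe : (Amat p α n).mulVec (fun x : ZMod n => ((e x.val : ℤ) : ℂ))
        = fun i : ZMod n => (N : ℂ) *
          ((if i = 0 then 1 else 0) - (if i = -1 then 1 else 0)) := by
      funext i
      rw [Matrix.mulVec, dotProduct]
      have hterm : ∀ x : ZMod n, (Amat p α n) i x * ((e x.val : ℤ) : ℂ)
          = ((e x.val : ℤ) : ℂ) * aZ p α n (i + x) := by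
        intro x
        rw [Amat, Matrix.of_apply]
        ring
      rw [Finset.sum_congr rfl fun x _ => hterm x,
        ← sum_apply_zmod (fun x => ((e x.val : ℤ) : ℂ) * aZ p α n (i + x))]
      have hterm2 : ∀ j ∈ Finset.range n,
          ((e ((j : ZMod n)).val : ℤ) : ℂ) * aZ p α n (i + (j : ZMod n))
          = ((e j : ℤ) : ℂ) * aC p α ((i.val + j) % n) := by
        intro j hj
        have hjlt := Finset.mem_range.mp hj
        rw [ZMod.val_cast_of_lt hjlt]
        congr 1
        rw [aZ]
        have hc2 : i + (j : ZMod n) = ((i.val + j : ℕ) : ZMod n) := by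
          conv_lhs => rw [← natCast_val i]
          push_cast
          ring
        rw [hc2, ZMod.val_natCast]
      rw [Finset.sum_congr rfl hterm2, hsums i.val i.val_lt]
      by_cases h0 : i = 0
      · rw [if_pos (by rw [h0]; exact ZMod.val_zero), h0]
        have : ((0 : ZMod n) = -1) = False := by
          rw [eq_iff_iff, iff_false]
          intro hcon
          have := hcastm1 0 (by omega)
          rw [Nat.cast_zero] at this
          have := this.mp hcon
          omega
        simp [this]
      · have hv0 : ¬ (i.val = 0) := fun hcon => h0 (by rwa [ZMod.val_eq_zero] at hcon)
        rw [if_neg hv0]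
        by_cases h1 : i = -1
        · have hv1 : i.val = n - 1 := by
            have := (hcastm1 i.val i.val_lt).mpr
            have h2 := (hcastm1 i.val i.val_lt).mp
            exact h2 (by rwa [natCast_val i])
          rw [if_pos hv1, if_neg h0, if_pos h1]
          ring
        · have hv1 : ¬ (i.val = n - 1) := by
            intro hcon
            apply h1
            have := (hcastm1 i.val i.val_lt).mpr hcon
            rwa [natCast_val i] at this
          rw [if_neg hv1, if_neg h0, if_neg h1]
          ring
    have hAc : (Amat p α n).mulVec (fun x : ZMod n => (N : ℂ) * cZf p α ω x)
        = fun i : ZMod n => (N : ℂ) *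
          ((if i = 0 then 1 else 0) - (if i = -1 then 1 else 0)) := by
      funext i
      rw [Matrix.mulVec, dotProduct]
      have hterm : ∀ x : ZMod n, (Amat p α n) i x * ((N : ℂ) * cZf p α ω x)
          = (N : ℂ) * (cZf p α ω x * aZ p α n (i + x)) := by
        intro x
        rw [Amat, Matrix.of_apply]
        ring
      rw [Finset.sum_congr rfl fun x _ => hterm x, ← Finset.mul_sum, conv2 hω hy i]
    have huniq := mulVec_unique hω hy (hAe.trans hAc.symm)
    have he : ∀ j, j < n → ((e j : ℤ) : ℂ) = (N : ℂ) * cC p n α ω j := by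
      intro j hj
      have h3 := congrFun huniq (j : ZMod n)
      simp only [ZMod.val_cast_of_lt hj] at h3
      rw [cC_eq hω hn2 hj]
      exact h3
    have hLN : L ∣ N := hdvd_of N hN0 (fun i hi => ⟨e i, (he i hi).symm⟩)
    set m := N / L with hm
    have hNm : N = L * m := (Nat.mul_div_cancel' hLN).symm
    have hmpos : 0 < m := by
      rcases Nat.eq_zero_or_pos m with h | h
      · rw [h, Nat.mul_zero] at hNm; omega
      · exact h
    have hem : ∀ j, j < n → e j = (m : ℤ) * Z j := by
      intro j hj
      have hc : ((e j : ℤ) : ℂ) = (((m : ℤ) * Z j : ℤ) : ℂ) := by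
        rw [he j hj]
        push_cast
        rw [hZ j hj]
        have : (N : ℂ) = (L : ℂ) * (m : ℂ) := by exact_mod_cast congrArg (fun t : ℕ => (t : ℂ)) hNm
        rw [this]
        ring
      exact_mod_cast hc
    have hsum_e : ∑ i ∈ Finset.range n, e i * α ^ (2 * i) = (m : ℤ) * T := by
      rw [hTz, Finset.mul_sum]
      exact Finset.sum_congr rfl fun i hi => by
        rw [hem i (Finset.mem_range.mp hi)]; ring
    rw [hsum_e] at hdvdN
    rcases hp.eq_one_or_self_of_dvd _ hgp with h1 | hpp
    · have hpT : ¬ ((p : ℤ) ∣ T) := by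
        intro hd
        have h2 : p ∣ T.natAbs := by
          have h3 := Int.natAbs_dvd_natAbs.mpr hd
          simpa using h3
        have h4 : p ∣ g := Nat.dvd_gcd dvd_rfl h2
        have := Nat.le_of_dvd hgpos h4
        omega
      have hpprime : Prime (p : ℤ) := Nat.prime_iff_prime_int.mp hp
      have hpm : (p : ℤ) ∣ (m : ℤ) := (hpprime.dvd_mul.mp hdvdN).resolve_right hpT
      have hpm' : p ∣ m := Int.natCast_dvd_natCast.mp hpm
      have hple : p ≤ m := Nat.le_of_dvd hmpos hpm'
      calc p / g * L = p * L := by rw [h1, Nat.div_one]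
      _ ≤ m * L := Nat.mul_le_mul_right _ hple
      _ = N := by rw [hNm]; ring
    · have hred : p / g * L = L := by rw [hpp, Nat.div_self hp.pos, one_mul]
      rw [hred]
      exact Nat.le_of_dvd hN0 hLN


end SiegelPaper
end
end
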